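/- arXiv:2605.20862 — 5 statements merged into one kernel-verified Lean document; each statement's English description precedes it below -/
import Mathlib

section
/- Let T be a finite tree and let T' be obtained from T by attaching one new pendant edge at a vertex v of T (adding one new vertex adjacent only to v). If λ_max(R_T) > 0, then λ_max(R_{T'}) > 0. -/
open Finset Matrix

/-- The Ricci matrix of a graph, indexed by edges: diagonal entry `-(1/d_x + 1/d_y)`
for an edge `{x,y}`, entry `1/d_z` for distinct edges sharing the vertex `z`, and `0`
for disjoint edges.  Here the degree of `v` is `(G.neighborSet v).ncard`. -/
noncomputable def ricciMatrix {V : Type*} (G : SimpleGraph V) [Fintype V] [DecidableEq V] :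
    Matrix G.edgeSet G.edgeSet ℝ := fun e f =>
  if (e : Sym2 V) = (f : Sym2 V) then
    -∑ v : V, if v ∈ (e : Sym2 V) then 1 / ((G.neighborSet v).ncard : ℝ) else 0
  else
    ∑ v : V, if v ∈ (e : Sym2 V) ∧ v ∈ (f : Sym2 V) then 1 / ((G.neighborSet v).ncard : ℝ) else 0

/-- The largest eigenvalue of a real matrix. -/
noncomputable def lambdaMax {n : Type*} [Fintype n] (M : Matrix n n ℝ) : ℝ :=
  sSup {t : ℝ | ∃ w : n → ℝ, w ≠ 0 ∧ M.mulVec w = t • w}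

/-- The graph obtained from `G` by attaching one new pendant vertex (`none`) adjacent
only to the vertex `v`. -/
def attachPendant {V : Type*} (G : SimpleGraph V) (v : V) : SimpleGraph (Option V) where
  Adj x y := match x, y with
    | none, none => False
    | none, some b => b = v
    | some a, none => a = v
    | some a, some b => G.Adj a b
  symm := ⟨by
    rintro (_ | a) (_ | b) h
    · exact h
    · exact h
    · exact h
    · exact G.adj_symm h⟩
  loopless := ⟨by
    rintro (_ | a) h
    · exact h
    · exact G.irrefl h⟩

instance {V : Type*} (G : SimpleGraph V) [DecidableEq V] [DecidableRel G.Adj] (v : V) :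
    DecidableRel (attachPendant G v).Adj := fun x y =>
  match x, y with
  | none, none => isFalse id
  | none, some b => inferInstanceAs (Decidable (b = v))
  | some a, none => inferInstanceAs (Decidable (a = v))
  | some a, some b => inferInstanceAs (Decidable (G.Adj a b))

section QF
variable {W : Type*} [Fintype W] [DecidableEq W] (H : SimpleGraph W) [DecidableRel H.Adj]

/-- degree as a real number -/
noncomputable def dReal (u : W) : ℝ := ((H.neighborSet u).ncard : ℝ)

/-- sum of x over edges incident to u -/
noncomputable def eS (x : H.edgeSet → ℝ) (u : W) : ℝ :=
  ∑ e : H.edgeSet, if u ∈ (e : Sym2 W) then x e else 0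

noncomputable def eT (x : H.edgeSet → ℝ) (u : W) : ℝ :=
  ∑ e : H.edgeSet, if u ∈ (e : Sym2 W) then (x e)^2 else 0

theorem qf_eq (x : H.edgeSet → ℝ) :
    x ⬝ᵥ (ricciMatrix H) *ᵥ x
      = ∑ u : W, (1 / dReal H u) * ((eS H x u)^2 - 2 * eT H x u) := by
  have key : ∀ e f : H.edgeSet, x e * ((ricciMatrix H) e f * x f) =
      (∑ u : W, if u ∈ (e : Sym2 W) then (x e) * ((1 / dReal H u) * (if u ∈ (f : Sym2 W) then x f else 0)) else 0)
      - (if e = f then ∑ u : W, if u ∈ (e : Sym2 W) then 2 * ((1 / dReal H u) * (x e * x f)) else 0 else 0) := by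
    intro e f
    by_cases hef : e = f
    · subst hef
      simp only [ricciMatrix, dReal, if_pos rfl, if_true]
      rw [mul_comm (x e), mul_assoc, neg_mul, Finset.sum_mul, ← Finset.sum_neg_distrib,
        ← Finset.sum_sub_distrib]
      refine Finset.sum_congr rfl fun u _ => ?_
      split_ifs <;> ring
    · have hef' : (e : Sym2 W) ≠ (f : Sym2 W) := fun hh => hef (Subtype.ext hh)
      simp only [ricciMatrix, if_neg hef', if_neg hef, dReal, sub_zero]
      rw [Finset.sum_mul, Finset.mul_sum]
      refine Finset.sum_congr rfl fun u _ => ?_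
      split_ifs <;> simp_all <;> ring
  have lhs : x ⬝ᵥ (ricciMatrix H) *ᵥ x = ∑ e : H.edgeSet, ∑ f : H.edgeSet,
      x e * ((ricciMatrix H) e f * x f) := by
    simp [dotProduct, mulVec, Finset.mul_sum]
  rw [lhs, Finset.sum_congr rfl fun e _ => Finset.sum_congr rfl fun f _ => key e f]
  rw [Finset.sum_congr rfl fun (e : H.edgeSet) (_ : e ∈ Finset.univ) => Finset.sum_sub_distrib _ _,
    Finset.sum_sub_distrib]
  have part1 : (∑ e : H.edgeSet, ∑ f : H.edgeSet, ∑ u : W,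
      if u ∈ (e : Sym2 W) then (x e) * ((1 / dReal H u) * (if u ∈ (f : Sym2 W) then x f else 0)) else 0)
      = ∑ u : W, (1 / dReal H u) * (eS H x u)^2 := by
    rw [Finset.sum_comm]
    rw [Finset.sum_congr rfl fun (f : H.edgeSet) (_ : f ∈ Finset.univ) => Finset.sum_comm]
    rw [Finset.sum_comm]
    refine Finset.sum_congr rfl fun u _ => ?_
    have : ∀ e : H.edgeSet, (∑ f : H.edgeSet,
        if u ∈ (e : Sym2 W) then (x e) * ((1 / dReal H u) * (if u ∈ (f : Sym2 W) then x f else 0)) else 0)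
        = (if u ∈ (e : Sym2 W) then x e else 0) * ((1 / dReal H u) * eS H x u) := by
      intro e
      by_cases he : u ∈ (e : Sym2 W)
      · simp only [if_pos he, eS, Finset.mul_sum]
      · simp [if_neg he]
    rw [Finset.sum_comm, Finset.sum_congr rfl fun e _ => this e, ← Finset.sum_mul, ← eS]
    ring
  have part2 : (∑ e : H.edgeSet, ∑ f : H.edgeSet,
      if e = f then ∑ u : W, if u ∈ (e : Sym2 W) then 2 * ((1 / dReal H u) * (x e * x f)) else 0 else 0)
      = ∑ u : W, 2 * ((1 / dReal H u) * eT H x u) := by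
    rw [Finset.sum_congr rfl fun (e : H.edgeSet) (_ : e ∈ Finset.univ) =>
      (Finset.sum_ite_eq Finset.univ e _ ).trans (if_pos (Finset.mem_univ e))]
    rw [Finset.sum_comm]
    refine Finset.sum_congr rfl fun u _ => ?_
    rw [eT, Finset.mul_sum, Finset.mul_sum]
    refine Finset.sum_congr rfl fun e _ => ?_
    split_ifs <;> ring
  rw [part1, part2, ← Finset.sum_sub_distrib]
  exact Finset.sum_congr rfl fun u _ => by ring
end QF

section Pend
variable {V : Type*} [Fintype V] [DecidableEq V] (G : SimpleGraph V) [DecidableRel G.Adj] (v : V)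

@[simp] lemma attachPendant_adj_some_some (a b : V) :
    (attachPendant G v).Adj (some a) (some b) ↔ G.Adj a b := Iff.rfl

@[simp] lemma attachPendant_adj_none_some (b : V) :
    (attachPendant G v).Adj none (some b) ↔ b = v := Iff.rfl

@[simp] lemma attachPendant_adj_some_none (a : V) :
    (attachPendant G v).Adj (some a) none ↔ a = v := Iff.rfl

@[simp] lemma attachPendant_adj_none_none :
    (attachPendant G v).Adj none none ↔ False := Iff.rfl

/-- the new pendant edge -/
def pendE : (attachPendant G v).edgeSet :=
  ⟨s(none, some v), by rw [SimpleGraph.mem_edgeSet]; exact rfl⟩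

/-- the old edges, mapped -/
def oldE (e : G.edgeSet) : (attachPendant G v).edgeSet := by
  refine ⟨Sym2.map some (e : Sym2 V), ?_⟩
  obtain ⟨z, hz⟩ := e
  induction z with
  | _ a b =>
    rw [Sym2.map_pair_eq, SimpleGraph.mem_edgeSet]
    exact hz

lemma oldE_coe (e : G.edgeSet) : (oldE G v e : Sym2 (Option V)) = Sym2.map some (e : Sym2 V) := rfl

lemma mem_oldE (u : V) (e : G.edgeSet) :
    some u ∈ (oldE G v e : Sym2 (Option V)) ↔ u ∈ (e : Sym2 V) := by
  rw [oldE_coe, Sym2.mem_map]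
  constructor
  · rintro ⟨y, hy, hyu⟩; rwa [Option.some_inj.mp hyu] at hy
  · exact fun hu => ⟨u, hu, rfl⟩

lemma none_not_mem_oldE (e : G.edgeSet) :
    ¬ (none ∈ (oldE G v e : Sym2 (Option V))) := by
  rw [oldE_coe, Sym2.mem_map]
  rintro ⟨y, -, hy⟩; exact Option.some_ne_none y hy

lemma mem_pendE (u : V) : some u ∈ (pendE G v : Sym2 (Option V)) ↔ u = v := by
  simp [pendE]

lemma none_mem_pendE : none ∈ (pendE G v : Sym2 (Option V)) := by
  simp [pendE]

/-- the equivalence between `Option G.edgeSet` and the edge set of the extended graph -/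
noncomputable def pendEquiv : Option G.edgeSet ≃ (attachPendant G v).edgeSet := by
  refine Equiv.ofBijective (fun o => o.elim (pendE G v) (oldE G v)) ⟨?_, ?_⟩
  · rintro (_ | e) (_ | f) hof
    · rfl
    · simp only [Option.elim] at hof
      exact absurd (hof ▸ none_mem_pendE G v) (none_not_mem_oldE G v f)
    · simp only [Option.elim] at hof
      exact absurd (hof ▸ none_mem_pendE G v) (none_not_mem_oldE G v e)
    · simp only [Option.elim] at hof
      have := congrArg Subtype.val hof
      exact congrArg some (Subtype.ext (Sym2.map.injective (Option.some_injective V) this))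
  · rintro ⟨z, hz⟩
    induction z with
    | _ a b =>
      rw [SimpleGraph.mem_edgeSet] at hz
      match a, b, hz with
      | none, none, hz => exact absurd hz id
      | none, some b, hz =>
        refine ⟨none, Subtype.ext ?_⟩
        have hb : b = v := hz
        subst hb
        rfl
      | some a, none, hz =>
        refine ⟨none, Subtype.ext ?_⟩
        have ha : a = v := hz
        subst ha
        exact Sym2.eq_swap.symm
      | some a, some b, hz =>
        refine ⟨some ⟨s(a,b), hz⟩, Subtype.ext ?_⟩
        show (oldE G v ⟨s(a,b), hz⟩ : Sym2 (Option V)) = _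
        rw [oldE_coe, Sym2.map_pair_eq]

lemma pend_deg_none : dReal (attachPendant G v) none = 1 := by
  have : (attachPendant G v).neighborSet none = {some v} := by
    ext (_ | b) <;> simp [SimpleGraph.neighborSet]
  rw [dReal, this, Set.ncard_singleton, Nat.cast_one]

lemma pend_deg_some_ne (u : V) (hu : u ≠ v) :
    dReal (attachPendant G v) (some u) = dReal G u := by
  have : (attachPendant G v).neighborSet (some u) = some '' G.neighborSet u := by
    ext (_ | b)
    · simp [SimpleGraph.neighborSet, hu]
    · simp [SimpleGraph.neighborSet]
  rw [dReal, this, Set.ncard_image_of_injective _ (Option.some_injective V), dReal]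

lemma pend_deg_some_v : dReal (attachPendant G v) (some v) = dReal G v + 1 := by
  have : (attachPendant G v).neighborSet (some v) = insert none (some '' G.neighborSet v) := by
    ext (_ | b)
    · simp [SimpleGraph.neighborSet]
    · simp [SimpleGraph.neighborSet]
  rw [dReal, this, Set.ncard_insert_of_notMem (by simp) (Set.toFinite _),
    Set.ncard_image_of_injective _ (Option.some_injective V), dReal, Nat.cast_add, Nat.cast_one,
    add_comm]

end Pend

section Ext
variable {V : Type*} [Fintype V] [DecidableEq V] (G : SimpleGraph V) [DecidableRel G.Adj] (v : V)
  (w : G.edgeSet → ℝ) (c : ℝ)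

/-- extend `w` by `c` on the new pendant edge -/
noncomputable def xExt : (attachPendant G v).edgeSet → ℝ :=
  fun e' => Option.elim ((pendEquiv G v).symm e') c w

lemma xExt_pendE : xExt G v w c (pendE G v) = c := by
  have : (pendEquiv G v).symm (pendE G v) = none := by
    rw [Equiv.symm_apply_eq]; rfl
  rw [xExt, this, Option.elim]

lemma xExt_oldE (e : G.edgeSet) : xExt G v w c (oldE G v e) = w e := by
  have : (pendEquiv G v).symm (oldE G v e) = some e := by
    rw [Equiv.symm_apply_eq]; rfl
  rw [xExt, this, Option.elim]

lemma sum_pend (g : (attachPendant G v).edgeSet → ℝ) :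
    ∑ e' : (attachPendant G v).edgeSet, g e' = g (pendE G v) + ∑ e : G.edgeSet, g (oldE G v e) := by
  rw [← Equiv.sum_comp (pendEquiv G v) g, Fintype.sum_option]
  rfl

lemma eS_ext_none : eS (attachPendant G v) (xExt G v w c) none = c := by
  rw [eS, sum_pend]
  rw [if_pos (none_mem_pendE G v), xExt_pendE]
  rw [Finset.sum_congr rfl fun e _ => if_neg (none_not_mem_oldE G v e), Finset.sum_const_zero,
    add_zero]

lemma eT_ext_none : eT (attachPendant G v) (xExt G v w c) none = c^2 := by
  rw [eT, sum_pend]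
  rw [if_pos (none_mem_pendE G v), xExt_pendE]
  rw [Finset.sum_congr rfl fun e _ => if_neg (none_not_mem_oldE G v e), Finset.sum_const_zero,
    add_zero]

lemma eS_ext_some (u : V) : eS (attachPendant G v) (xExt G v w c) (some u)
    = (if u = v then c else 0) + eS G w u := by
  rw [eS, sum_pend]
  congr 1
  · rw [xExt_pendE]
    by_cases hu : u = v
    · rw [if_pos ((mem_pendE G v u).mpr hu), if_pos hu]
    · rw [if_neg (fun hh => hu ((mem_pendE G v u).mp hh)), if_neg hu]
  · rw [eS]
    refine Finset.sum_congr rfl fun e _ => ?_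
    rw [xExt_oldE]
    by_cases he : u ∈ (e : Sym2 V)
    · rw [if_pos ((mem_oldE G v u e).mpr he), if_pos he]
    · rw [if_neg (fun hh => he ((mem_oldE G v u e).mp hh)), if_neg he]

lemma eT_ext_some (u : V) : eT (attachPendant G v) (xExt G v w c) (some u)
    = (if u = v then c^2 else 0) + eT G w u := by
  rw [eT, sum_pend]
  congr 1
  · rw [xExt_pendE]
    by_cases hu : u = v
    · rw [if_pos ((mem_pendE G v u).mpr hu), if_pos hu]
    · rw [if_neg (fun hh => hu ((mem_pendE G v u).mp hh)), if_neg hu]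
  · rw [eT]
    refine Finset.sum_congr rfl fun e _ => ?_
    rw [xExt_oldE]
    by_cases he : u ∈ (e : Sym2 V)
    · rw [if_pos ((mem_oldE G v u e).mpr he), if_pos he]
    · rw [if_neg (fun hh => he ((mem_oldE G v u e).mp hh)), if_neg he]

theorem qf_ext :
    (xExt G v w c) ⬝ᵥ (ricciMatrix (attachPendant G v)) *ᵥ (xExt G v w c)
      = (w ⬝ᵥ (ricciMatrix G) *ᵥ w)
        + (-(c^2) + (1/(dReal G v + 1)) * ((eS G w v + c)^2 - 2*(eT G w v + c^2))
          - (1/dReal G v) * ((eS G w v)^2 - 2*(eT G w v))) := by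
  rw [qf_eq, qf_eq, Fintype.sum_option]
  rw [pend_deg_none, eS_ext_none, eT_ext_none]
  rw [← Finset.add_sum_erase Finset.univ _ (Finset.mem_univ v)]
  rw [← Finset.add_sum_erase Finset.univ
    (fun u => (1 / dReal G u) * ((eS G w u)^2 - 2 * eT G w u)) (Finset.mem_univ v)]
  rw [Finset.sum_congr rfl fun u hu => by
    rw [pend_deg_some_ne G v u (Finset.ne_of_mem_erase hu), eS_ext_some, eT_ext_some,
      if_neg (Finset.ne_of_mem_erase hu), if_neg (Finset.ne_of_mem_erase hu), zero_add, zero_add]]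
  rw [pend_deg_some_v, eS_ext_some, eT_ext_some, if_pos rfl, if_pos rfl]
  ring

end Ext

lemma core_ineq (d s T : ℝ) (hd : 1 ≤ d) (hT : 0 ≤ T) (hcs : s^2 ≤ d*T) :
    0 ≤ -((s/(d+2))^2) + (1/(d+1)) * ((s + s/(d+2))^2 - 2*(T + (s/(d+2))^2))
      - (1/d)*(s^2 - 2*T) := by
  have hd0 : (0:ℝ) < d := by linarith
  have h1 : (0:ℝ) < d + 1 := by linarith
  have h2 : (0:ℝ) < d + 2 := by linarith
  rw [← sub_nonneg] at hcs
  have key : -((s/(d+2))^2) + (1/(d+1)) * ((s + s/(d+2))^2 - 2*(T + (s/(d+2))^2))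
      - (1/d)*(s^2 - 2*T)
      = (2*(d*T - s^2) + 4*T) / (d*(d+1)*(d+2)) := by
    field_simp
    ring
  rw [key]
  apply div_nonneg
  · nlinarith
  · positivity

section CS
variable {V : Type*} [Fintype V] [DecidableEq V] (G : SimpleGraph V) [DecidableRel G.Adj]

lemma card_incident (u : V) :
    ∑ e : G.edgeSet, (if u ∈ (e : Sym2 V) then (1:ℝ) else 0) = dReal G u := by
  rw [Finset.sum_boole, dReal]
  norm_cast
  rw [show (G.neighborSet u).ncard = G.degree u by
    rw [SimpleGraph.degree, SimpleGraph.neighborFinset_def, Set.ncard_eq_toFinset_card']]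
  rw [← SimpleGraph.card_incidenceFinset_eq_degree]
  refine Finset.card_bij (fun e _ => (e : Sym2 V)) ?_ ?_ ?_
  · rintro ⟨z, hz⟩ hmem
    rw [Finset.mem_filter] at hmem
    rw [SimpleGraph.mem_incidenceFinset]
    exact ⟨hz, hmem.2⟩
  · intro a ha b hb hab
    exact Subtype.ext hab
  · intro z hz
    rw [SimpleGraph.mem_incidenceFinset] at hz
    exact ⟨⟨z, hz.1⟩, Finset.mem_filter.mpr ⟨Finset.mem_univ _, hz.2⟩, rfl⟩

lemma cs_ineq (w : G.edgeSet → ℝ) (u : V) :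
    (eS G w u)^2 ≤ dReal G u * eT G w u := by
  have := Finset.sum_mul_sq_le_sq_mul_sq Finset.univ
    (fun e : G.edgeSet => if u ∈ (e : Sym2 V) then (1:ℝ) else 0)
    (fun e : G.edgeSet => if u ∈ (e : Sym2 V) then w e else 0)
  have h1 : (∑ e : G.edgeSet, (if u ∈ (e : Sym2 V) then (1:ℝ) else 0)
      * (if u ∈ (e : Sym2 V) then w e else 0)) = eS G w u := by
    rw [eS]; exact Finset.sum_congr rfl fun e _ => by split_ifs <;> ring
  have h2 : (∑ e : G.edgeSet, (if u ∈ (e : Sym2 V) then (1:ℝ) else 0)^2) = dReal G u := by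
    rw [← card_incident G u]; exact Finset.sum_congr rfl fun e _ => by split_ifs <;> ring
  have h3 : (∑ e : G.edgeSet, (if u ∈ (e : Sym2 V) then w e else 0)^2) = eT G w u := by
    rw [eT]; exact Finset.sum_congr rfl fun e _ => by split_ifs <;> ring
  rw [h1, h2, h3] at this
  exact this

lemma one_le_deg (hconn : G.Connected) (v : V) (e : G.edgeSet) : 1 ≤ dReal G v := by
  have hex : ∃ y, G.Adj v y := by
    obtain ⟨z, hz⟩ := e
    refine Sym2.ind (f := fun z => z ∈ G.edgeSet → ∃ y, G.Adj v y)
      (fun a b hab => ?_) z hz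
    rw [SimpleGraph.mem_edgeSet] at hab
    by_cases hva : v = a
    · exact ⟨b, hva ▸ hab⟩
    · obtain ⟨p⟩ := hconn.preconnected v a
      exact ⟨p.snd, p.adj_snd (SimpleGraph.Walk.not_nil_of_ne hva)⟩
  obtain ⟨y, hy⟩ := hex
  rw [dReal]
  have : 0 < (G.neighborSet v).ncard := (Set.ncard_pos (Set.toFinite _)).mpr ⟨y, hy⟩
  exact_mod_cast this

end CS

lemma bddAbove_spec {n : Type*} [Fintype n] (M : Matrix n n ℝ) :
    BddAbove {t : ℝ | ∃ w : n → ℝ, w ≠ 0 ∧ M.mulVec w = t • w} := by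
  refine ⟨∑ i, ∑ j, |M i j|, ?_⟩
  rintro t ⟨w, hw, hMw⟩
  obtain ⟨j₀, hj₀⟩ := Function.ne_iff.mp hw
  obtain ⟨i, -, hi⟩ := Finset.exists_max_image Finset.univ (fun i => |w i|)
    ⟨j₀, Finset.mem_univ _⟩
  have hwi : 0 < |w i| := lt_of_lt_of_le (abs_pos.mpr hj₀) (hi j₀ (Finset.mem_univ _))
  have h1 : t * w i = ∑ j, M i j * w j := by
    have := congrFun hMw i
    rw [Matrix.mulVec, dotProduct] at this
    rw [this, Pi.smul_apply, smul_eq_mul]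
  have h2 : |t| * |w i| ≤ (∑ j, |M i j|) * |w i| := by
    rw [← abs_mul, h1]
    refine le_trans (Finset.abs_sum_le_sum_abs _ _) ?_
    rw [Finset.sum_mul]
    refine Finset.sum_le_sum fun j _ => ?_
    rw [abs_mul]
    exact mul_le_mul_of_nonneg_left (hi j (Finset.mem_univ _)) (abs_nonneg _)
  have ht : |t| ≤ ∑ j, |M i j| := le_of_mul_le_mul_right h2 hwi
  calc t ≤ |t| := le_abs_self t
    _ ≤ ∑ j, |M i j| := ht
    _ ≤ ∑ i, ∑ j, |M i j| := Finset.single_le_sum (f := fun i => ∑ j, |M i j|)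
        (fun i _ => Finset.sum_nonneg fun j _ => abs_nonneg _) (Finset.mem_univ i)

lemma ricci_isHermitian {V : Type*} [Fintype V] [DecidableEq V] (G : SimpleGraph V)
    [DecidableRel G.Adj] : (ricciMatrix G).IsHermitian := by
  refine Matrix.ext fun e f => ?_
  rw [Matrix.conjTranspose_apply, star_trivial]
  by_cases hef : (e : Sym2 V) = (f : Sym2 V)
  · rw [ricciMatrix, ricciMatrix, if_pos hef, if_pos hef.symm, hef]
  · rw [ricciMatrix, ricciMatrix, if_neg hef, if_neg (Ne.symm hef)]
    exact Finset.sum_congr rfl fun u _ => if_congr and_comm rfl rfl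

lemma exists_pos_eig {n : Type*} [Fintype n] [DecidableEq n] (M : Matrix n n ℝ)
    (hM : M.IsHermitian) (x : n → ℝ) (hx : 0 < x ⬝ᵥ M *ᵥ x) :
    ∃ t : ℝ, 0 < t ∧ ∃ w : n → ℝ, w ≠ 0 ∧ M.mulVec w = t • w := by
  by_contra hcon
  push_neg at hcon
  have hN : (-M).IsHermitian := hM.neg
  have heig : ∀ j, 0 ≤ hN.eigenvalues j := by
    intro j
    by_contra hneg
    push_neg at hneg
    have hu := hN.mulVec_eigenvectorBasis j
    have hu0 : ⇑(hN.eigenvectorBasis j) ≠ 0 := by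
      intro h0
      exact hN.eigenvectorBasis.orthonormal.ne_zero j (by ext i; exact congrFun h0 i)
    have hMu : M.mulVec ⇑(hN.eigenvectorBasis j) = (-(hN.eigenvalues j)) • ⇑(hN.eigenvectorBasis j) := by
      rw [Matrix.neg_mulVec] at hu
      rw [← neg_neg (M.mulVec _), hu, neg_smul]
    exact hcon _ (by linarith) _ hu0 hMu
  have hpsd := hN.posSemidef_iff_eigenvalues_nonneg.mpr heig
  have h2 := hpsd.dotProduct_mulVec_nonneg x
  have hsx : star x = x := by funext i; exact star_trivial _
  rw [hsx, Matrix.neg_mulVec, dotProduct_neg] at h2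
  linarith

/-- **Strict monotonicity of the positive region under leaf attachment.**
If `T'` is obtained from a finite tree `T` by attaching one pendant edge at a vertex `v`
and `λ_max(R_T) > 0`, then `λ_max(R_{T'}) > 0`. -/
theorem lambdaMax_pos_attachPendant {V : Type*} [Fintype V] [DecidableEq V]
    (G : SimpleGraph V) [DecidableRel G.Adj] (hT : G.IsTree) (v : V)
    (h : 0 < lambdaMax (ricciMatrix G)) :
    0 < lambdaMax (ricciMatrix (attachPendant G v)) := by
  -- extract a positive eigenvalue of the old matrix
  have hex : ∃ t ∈ {t : ℝ | ∃ w : G.edgeSet → ℝ, w ≠ 0 ∧ (ricciMatrix G).mulVec w = t • w},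
      0 < t := by
    by_contra hcon
    push_neg at hcon
    have := Real.sSup_le (fun t ht => hcon t ht) le_rfl
    rw [lambdaMax] at h
    linarith
  obtain ⟨t, ⟨w, hw0, hMw⟩, ht⟩ := hex
  have hww : 0 < w ⬝ᵥ w := by
    obtain ⟨j, hj⟩ := Function.ne_iff.mp hw0
    exact Finset.sum_pos' (fun i _ => mul_self_nonneg _)
      ⟨j, Finset.mem_univ _, mul_self_pos.mpr hj⟩
  have hpos : 0 < w ⬝ᵥ (ricciMatrix G) *ᵥ w := by
    rw [hMw, dotProduct_smul, smul_eq_mul]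
    exact mul_pos ht hww
  -- an edge of G
  obtain ⟨e₁, -⟩ := Function.ne_iff.mp hw0
  have hd1 : 1 ≤ dReal G v := one_le_deg G hT.isConnected v e₁
  have hT0 : 0 ≤ eT G w v := Finset.sum_nonneg fun e _ => by
    split_ifs
    · exact sq_nonneg _
    · exact le_refl 0
  have hcs := cs_ineq G w v
  set c : ℝ := eS G w v / (dReal G v + 2) with hc
  have hcore := core_ineq (dReal G v) (eS G w v) (eT G w v) hd1 hT0 hcs
  have hqf := qf_ext G v w c
  have hxpos : 0 < (xExt G v w c) ⬝ᵥ (ricciMatrix (attachPendant G v)) *ᵥ (xExt G v w c) := by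
    rw [hqf, hc]
    have h2 : (0:ℝ) < dReal G v + 2 := by linarith
    calc (0:ℝ) < w ⬝ᵥ (ricciMatrix G) *ᵥ w := hpos
      _ ≤ _ := by linarith [hcore]
  obtain ⟨t', ht', w', hw', hMw'⟩ :=
    exists_pos_eig _ (ricci_isHermitian (attachPendant G v)) _ hxpos
  rw [lambdaMax]
  calc (0:ℝ) < t' := ht'
    _ ≤ _ := le_csSup (bddAbove_spec _) ⟨w', hw', hMw'⟩
end

section
/- Let a, b ≥ 1 and let T_2(a,b) be the double star: two adjacent spine vertices, with a pendant leaves attached to the first and b pendant leaves attached to the second. Then λ_max(R_{T_2(a,b)}) < 0 if and only if (a−1)(b−1) < 4, and λ_max(R_{T_2(a,b)}) = 0 if and only if (a−1)(b−1) = 4. -/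
open Finset Matrix

/-- The caterpillar `T_m(a)`: a spine path `v_0 — v_1 — ⋯ — v_{m-1}` (the `Sum.inl`
vertices) together with `a i` pendant leaves attached to the spine vertex `v i`
(the `Sum.inr ⟨i, _⟩` vertices). -/
def caterpillar (m : ℕ) (a : Fin m → ℕ) :
    SimpleGraph (Fin m ⊕ (Σ i : Fin m, Fin (a i))) where
  Adj x y := match x, y with
    | .inl i, .inl j => i.val + 1 = j.val ∨ j.val + 1 = i.val
    | .inl i, .inr t => i = t.1
    | .inr t, .inl i => i = t.1
    | .inr _, .inr _ => False
  symm := by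
    constructor
    rintro (i | t) (j | s) h
    · exact Or.symm h
    · exact h
    · exact h
    · exact h
  loopless := by
    constructor
    rintro (i | t) h
    · omega
    · exact h

instance (m : ℕ) (a : Fin m → ℕ) : DecidableRel (caterpillar m a).Adj := fun x y =>
  match x, y with
  | .inl _, .inl _ => inferInstanceAs (Decidable (_ ∨ _))
  | .inl i, .inr t => inferInstanceAs (Decidable (i = t.1))
  | .inr t, .inl i => inferInstanceAs (Decidable (i = t.1))
  | .inr _, .inr _ => isFalse id

namespace Spec
variable {n : Type*} [Fintype n] [DecidableEq n] {M : Matrix n n ℝ}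

lemma dot_self_pos {w : n → ℝ} (hw : w ≠ 0) : 0 < w ⬝ᵥ w := by
  obtain ⟨j, hj⟩ := Function.ne_iff.mp hw
  have : (0:ℝ) < ∑ i, w i * w i := by
    apply Finset.sum_pos' (fun i _ => mul_self_nonneg _)
      ⟨j, Finset.mem_univ j, mul_self_pos.mpr hj⟩
  simpa [dotProduct] using this

lemma eig_mem (hM : M.IsHermitian) (i : n) :
    hM.eigenvalues i ∈ {t : ℝ | ∃ w : n → ℝ, w ≠ 0 ∧ M.mulVec w = t • w} := by
  refine ⟨⇑(hM.eigenvectorBasis i), ?_, hM.mulVec_eigenvectorBasis i⟩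
  have := hM.eigenvectorBasis.orthonormal.ne_zero i
  intro h
  exact this (by ext j; exact congrFun h j)

lemma mem_range_eig (hM : M.IsHermitian) {t : ℝ}
    (ht : t ∈ {t : ℝ | ∃ w : n → ℝ, w ≠ 0 ∧ M.mulVec w = t • w}) :
    ∃ i, hM.eigenvalues i = t := by
  obtain ⟨w, hw0, hw⟩ := ht
  by_contra hc
  push_neg at hc
  have hMT : Mᵀ = M := by
    ext i j
    rw [Matrix.transpose_apply]
    have := hM.apply j i
    simpa using this.symm
  have key : ∀ i, (⇑(hM.eigenvectorBasis i) : n → ℝ) ⬝ᵥ w = 0 := by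
    intro i
    have h1 : (⇑(hM.eigenvectorBasis i) : n → ℝ) ⬝ᵥ (M *ᵥ w)
        = t * ((⇑(hM.eigenvectorBasis i) : n → ℝ) ⬝ᵥ w) := by
      rw [hw, dotProduct_smul]; rfl
    have h2 : (⇑(hM.eigenvectorBasis i) : n → ℝ) ⬝ᵥ (M *ᵥ w)
        = hM.eigenvalues i * ((⇑(hM.eigenvectorBasis i) : n → ℝ) ⬝ᵥ w) := by
      rw [dotProduct_mulVec, ← mulVec_transpose, hMT, hM.mulVec_eigenvectorBasis,
        smul_dotProduct]; rfl
    rcases mul_eq_mul_right_iff.mp (h2.symm.trans h1) with h | h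
    · exact absurd h (hc i)
    · exact h
  apply hw0
  have hrepr : ∀ i, hM.eigenvectorBasis.repr (WithLp.toLp 2 w) i = 0 := by
    intro i
    rw [hM.eigenvectorBasis.repr_apply_apply]
    calc (inner ℝ (hM.eigenvectorBasis i) (WithLp.toLp 2 w) : ℝ)
        = (⇑(hM.eigenvectorBasis i) : n → ℝ) ⬝ᵥ w := by
          simp [EuclideanSpace.inner_eq_star_dotProduct, dotProduct, mul_comm]
      _ = 0 := key i
  have h0 : hM.eigenvectorBasis.repr (WithLp.toLp 2 w) = 0 := by ext i; exact hrepr i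
  have hw' : (WithLp.toLp 2 w : EuclideanSpace ℝ n) = 0 := by
    simpa using hM.eigenvectorBasis.repr.map_eq_zero_iff.mp h0
  simpa using congrArg WithLp.ofLp hw'

lemma lambdaMax_mem (hM : M.IsHermitian) [Nonempty n] :
    lambdaMax M ∈ {t : ℝ | ∃ w : n → ℝ, w ≠ 0 ∧ M.mulVec w = t • w} ∧
    ∀ t ∈ {t : ℝ | ∃ w : n → ℝ, w ≠ 0 ∧ M.mulVec w = t • w}, t ≤ lambdaMax M := by
  set S := {t : ℝ | ∃ w : n → ℝ, w ≠ 0 ∧ M.mulVec w = t • w} with hS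
  have hsub : S ⊆ Set.range hM.eigenvalues := fun t ht => by
    obtain ⟨i, hi⟩ := mem_range_eig hM ht; exact ⟨i, hi⟩
  have hfin : S.Finite := Set.Finite.subset (Set.finite_range _) hsub
  have hne : S.Nonempty := ⟨_, eig_mem hM (Classical.arbitrary n)⟩
  have hbdd : BddAbove S := hfin.bddAbove
  exact ⟨hne.csSup_mem hfin, fun t ht => le_csSup hbdd ht⟩

lemma lambdaMax_neg (hM : M.IsHermitian) [Nonempty n]
    (h : ∀ w : n → ℝ, w ≠ 0 → w ⬝ᵥ (M *ᵥ w) < 0) : lambdaMax M < 0 := by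
  obtain ⟨⟨w, hw0, hw⟩, -⟩ := lambdaMax_mem hM
  have h1 : w ⬝ᵥ (M *ᵥ w) = lambdaMax M * (w ⬝ᵥ w) := by
    rw [hw, dotProduct_smul]; rfl
  have h2 := h w hw0
  nlinarith [dot_self_pos hw0]

lemma lambdaMax_zero (hM : M.IsHermitian)
    (h : ∀ w : n → ℝ, w ⬝ᵥ (M *ᵥ w) ≤ 0) {w0 : n → ℝ} (hw0 : w0 ≠ 0)
    (hker : M *ᵥ w0 = 0) : lambdaMax M = 0 := by
  have : Nonempty n := by
    obtain ⟨j, -⟩ := Function.ne_iff.mp hw0; exact ⟨j⟩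
  obtain ⟨⟨w, hwne, hw⟩, hub⟩ := lambdaMax_mem hM
  have h1 : w ⬝ᵥ (M *ᵥ w) = lambdaMax M * (w ⬝ᵥ w) := by
    rw [hw, dotProduct_smul]; rfl
  have hle : lambdaMax M ≤ 0 := by nlinarith [dot_self_pos hwne, h w]
  have hge : 0 ≤ lambdaMax M := by
    refine hub 0 ⟨w0, hw0, ?_⟩
    rw [hker, zero_smul]
  linarith

lemma lambdaMax_pos (hM : M.IsHermitian) [Nonempty n]
    (h : ∃ w : n → ℝ, 0 < w ⬝ᵥ (M *ᵥ w)) : 0 < lambdaMax M := by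
  obtain ⟨w, hw⟩ := h
  have hM' : (-M).IsHermitian := hM.neg
  have hnotsd : ¬ (-M).PosSemidef := by
    intro hsd
    have := hsd.dotProduct_mulVec_nonneg w
    simp only [star_trivial, neg_mulVec, dotProduct_neg] at this
    linarith
  have hexj : ∃ j, hM'.eigenvalues j < 0 := by
    by_contra hcon
    push_neg at hcon
    exact hnotsd (hM'.posSemidef_iff_eigenvalues_nonneg.mpr hcon)
  obtain ⟨j, hj⟩ := hexj
  obtain ⟨-, hub⟩ := lambdaMax_mem hM
  have hmem := eig_mem hM' j
  obtain ⟨v, hv0, hv⟩ := hmem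
  have hv' : M *ᵥ v = (-hM'.eigenvalues j) • v := by
    have : -(M *ᵥ v) = hM'.eigenvalues j • v := by rw [← neg_mulVec]; exact hv
    rw [neg_smul, ← this, neg_neg]
  have := hub (-hM'.eigenvalues j) ⟨v, hv0, hv'⟩
  linarith

end Spec


namespace DS
variable (a b : ℕ)

abbrev V2 := Fin 2 ⊕ (Σ i : Fin 2, Fin (![a, b] i))
abbrev G2 : SimpleGraph (V2 a b) := caterpillar 2 ![a, b]

lemma adj_inl_inl (i j : Fin 2) :
    (G2 a b).Adj (.inl i) (.inl j) ↔ (i.val + 1 = j.val ∨ j.val + 1 = i.val) := Iff.rfl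
lemma adj_inl_inr (i : Fin 2) (t : Σ i : Fin 2, Fin (![a, b] i)) :
    (G2 a b).Adj (.inl i) (.inr t) ↔ i = t.1 := Iff.rfl
lemma adj_inr_inl (i : Fin 2) (t : Σ i : Fin 2, Fin (![a, b] i)) :
    (G2 a b).Adj (.inr t) (.inl i) ↔ i = t.1 := Iff.rfl
lemma adj_inr_inr (t s : Σ i : Fin 2, Fin (![a, b] i)) :
    ¬ (G2 a b).Adj (.inr t) (.inr s) := fun h => h

-- degree computation
lemma ncard_eq_degree (v : V2 a b) :
    ((G2 a b).neighborSet v).ncard = (G2 a b).degree v := by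
  rw [Set.ncard_eq_toFinset_card', SimpleGraph.degree]
  congr 1

lemma deg_sum (v : V2 a b) :
    (G2 a b).degree v = ∑ x : V2 a b, if (G2 a b).Adj v x then 1 else 0 := by
  rw [SimpleGraph.degree, SimpleGraph.neighborFinset_eq_filter, Finset.card_filter]

lemma deg_u : ((G2 a b).neighborSet (.inl 0)).ncard = a + 1 := by
  rw [ncard_eq_degree, deg_sum, Fintype.sum_sum_type, ← Finset.univ_sigma_univ, Finset.sum_sigma]
  simp only [adj_inl_inl, adj_inl_inr, Fin.sum_univ_two]
  simp only [Finset.sum_const, Finset.card_univ, Fintype.card_fin]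
  simp +decide
  omega

lemma deg_v : ((G2 a b).neighborSet (.inl 1)).ncard = b + 1 := by
  rw [ncard_eq_degree, deg_sum, Fintype.sum_sum_type, ← Finset.univ_sigma_univ, Finset.sum_sigma]
  simp only [adj_inl_inl, adj_inl_inr, Fin.sum_univ_two]
  simp only [Finset.sum_const, Finset.card_univ, Fintype.card_fin]
  simp +decide
  omega

lemma deg_leaf (t : Σ i : Fin 2, Fin (![a, b] i)) :
    ((G2 a b).neighborSet (.inr t)).ncard = 1 := by
  rw [ncard_eq_degree, deg_sum, Fintype.sum_sum_type, ← Finset.univ_sigma_univ, Finset.sum_sigma]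
  simp only [adj_inr_inl, adj_inr_inr, Fin.sum_univ_two]
  obtain ⟨i, k⟩ := t
  fin_cases i <;> simp +decide

def spineE : (G2 a b).edgeSet :=
  ⟨s(.inl 0, .inl 1), by rw [SimpleGraph.mem_edgeSet]; exact Or.inl rfl⟩
def eU (k : Fin (![a, b] 0)) : (G2 a b).edgeSet :=
  ⟨s(.inl 0, .inr ⟨0, k⟩), by rw [SimpleGraph.mem_edgeSet, adj_inl_inr]⟩
def eV (l : Fin (![a, b] 1)) : (G2 a b).edgeSet :=
  ⟨s(.inl 1, .inr ⟨1, l⟩), by rw [SimpleGraph.mem_edgeSet, adj_inl_inr]⟩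

lemma edge_classify (e : (G2 a b).edgeSet) :
    e = spineE a b ∨ (∃ k, e = eU a b k) ∨ (∃ l, e = eV a b l) := by
  obtain ⟨e, he⟩ := e
  induction e with
  | _ x y =>
    rw [SimpleGraph.mem_edgeSet] at he
    match x, y with
    | .inl i, .inl j =>
      left
      rw [adj_inl_inl] at he
      apply Subtype.ext
      show s(Sum.inl i, Sum.inl j) = s(Sum.inl 0, Sum.inl 1)
      have h2 := i.isLt
      have h3 := j.isLt
      rcases he with h | h
      · have : i = 0 ∧ j = 1 := by constructor <;> (apply Fin.ext; omega)
        rw [this.1, this.2]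
      · have : i = 1 ∧ j = 0 := by constructor <;> (apply Fin.ext; omega)
        rw [this.1, this.2, Sym2.eq_swap]
    | .inl i, .inr t =>
      rw [adj_inl_inr] at he
      obtain ⟨j, k⟩ := t
      have he' : i = j := he
      subst he'
      right
      obtain ⟨iv, hi⟩ := i
      interval_cases iv
      · exact Or.inl ⟨k, rfl⟩
      · exact Or.inr ⟨k, rfl⟩
    | .inr t, .inl i =>
      rw [adj_inr_inl] at he
      obtain ⟨j, k⟩ := t
      have he' : i = j := he
      subst he'
      right
      obtain ⟨iv, hi⟩ := i
      interval_cases iv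
      · exact Or.inl ⟨k, Subtype.ext (Sym2.eq_swap)⟩
      · exact Or.inr ⟨k, Subtype.ext (Sym2.eq_swap)⟩
    | .inr t, .inr s => exact absurd he (adj_inr_inr a b t s)

def φ : Unit ⊕ (Fin (![a, b] 0) ⊕ Fin (![a, b] 1)) → (G2 a b).edgeSet :=
  Sum.elim (fun _ => spineE a b) (Sum.elim (eU a b) (eV a b))

lemma φ_bij : Function.Bijective (φ a b) := by
  constructor
  · rintro (⟨⟩ | k | k) (⟨⟩ | l | l) h <;>
      simp only [φ, Sum.elim_inl, Sum.elim_inr, spineE, eU, eV, Subtype.ext_iff,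
        Sym2.eq_iff] at h <;> simp_all <;> rw [eq_of_heq h]
  · intro e
    rcases edge_classify a b e with h | ⟨k, h⟩ | ⟨l, h⟩
    · exact ⟨.inl (), h.symm⟩
    · exact ⟨.inr (.inl k), h.symm⟩
    · exact ⟨.inr (.inr l), h.symm⟩

lemma sum_edges (f : (G2 a b).edgeSet → ℝ) :
    ∑ e, f e = f (spineE a b) + (∑ k, f (eU a b k)) + (∑ l, f (eV a b l)) := by
  rw [← Function.Bijective.sum_comp (φ_bij a b) f]
  rw [Fintype.sum_sum_type, Fintype.sum_sum_type]
  simp only [φ, Sum.elim_inl, Sum.elim_inr, Fintype.sum_unique]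
  ring

section helpers
variable {W : Type*} [Fintype W] [DecidableEq W]

lemma sum_ite_one (p : W → Prop) [DecidablePred p] (x : W) (h : ∀ v, p v ↔ v = x)
    (f : W → ℝ) : (∑ v, if p v then f v else 0) = f x := by
  rw [Finset.sum_congr rfl (fun v _ => if_congr (h v) rfl rfl), Finset.sum_ite_eq' Finset.univ x f,
    if_pos (Finset.mem_univ x)]

lemma sum_ite_two (p : W → Prop) [DecidablePred p] (x y : W) (hxy : x ≠ y)
    (h : ∀ v, p v ↔ v = x ∨ v = y) (f : W → ℝ) :
    (∑ v, if p v then f v else 0) = f x + f y := by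
  have h2 : ∀ v, p v ↔ v ∈ ({x, y} : Finset W) := by
    intro v; rw [h v]; simp
  rw [Finset.sum_congr rfl (fun v _ => if_congr (h2 v) rfl rfl), Finset.sum_ite_mem,
    Finset.univ_inter, Finset.sum_pair hxy]

lemma sum_ite_zero (p : W → Prop) [DecidablePred p] (h : ∀ v, ¬ p v)
    (f : W → ℝ) : (∑ v, if p v then f v else 0) = 0 := by
  rw [Finset.sum_congr rfl (fun v _ => if_neg (h v)), Finset.sum_const, smul_zero]

end helpers

variable {a b}

lemma coe_spineE : ((spineE a b : (G2 a b).edgeSet) : Sym2 (V2 a b))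
    = s(.inl 0, .inl 1) := rfl
lemma coe_eU (k) : ((eU a b k : (G2 a b).edgeSet) : Sym2 (V2 a b))
    = s(.inl 0, .inr ⟨0, k⟩) := rfl
lemma coe_eV (l) : ((eV a b l : (G2 a b).edgeSet) : Sym2 (V2 a b))
    = s(.inl 1, .inr ⟨1, l⟩) := rfl

lemma entry_ss : ricciMatrix (G2 a b) (spineE a b) (spineE a b)
    = -(1/((a:ℝ)+1) + 1/((b:ℝ)+1)) := by
  rw [ricciMatrix, if_pos rfl, coe_spineE]
  rw [sum_ite_two _ (Sum.inl 0 : V2 a b) (Sum.inl 1 : V2 a b) (by simp) (fun v => Sym2.mem_iff)]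
  rw [deg_u, deg_v]
  push_cast
  ring

lemma entry_s_eU (k) : ricciMatrix (G2 a b) (spineE a b) (eU a b k) = 1/((a:ℝ)+1) := by
  rw [ricciMatrix, if_neg (by rw [coe_spineE, coe_eU]; simp), coe_spineE, coe_eU]
  rw [sum_ite_one _ (Sum.inl 0 : V2 a b)
    (by intro v; simp only [Sym2.mem_iff]; constructor
        · rintro ⟨h1 | h1, h2 | h2⟩ <;> simp_all
        · rintro rfl; simp)]
  rw [deg_u]; push_cast; ring

lemma entry_eU_s (k) : ricciMatrix (G2 a b) (eU a b k) (spineE a b) = 1/((a:ℝ)+1) := by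
  rw [ricciMatrix, if_neg (by rw [coe_spineE, coe_eU]; simp), coe_spineE, coe_eU]
  rw [sum_ite_one _ (Sum.inl 0 : V2 a b)
    (by intro v; simp only [Sym2.mem_iff]; constructor
        · rintro ⟨h1 | h1, h2 | h2⟩ <;> simp_all
        · rintro rfl; simp)]
  rw [deg_u]; push_cast; ring

lemma entry_s_eV (l) : ricciMatrix (G2 a b) (spineE a b) (eV a b l) = 1/((b:ℝ)+1) := by
  rw [ricciMatrix, if_neg (by rw [coe_spineE, coe_eV]; simp), coe_spineE, coe_eV]
  rw [sum_ite_one _ (Sum.inl 1 : V2 a b)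
    (by intro v; simp only [Sym2.mem_iff]; constructor
        · rintro ⟨h1 | h1, h2 | h2⟩ <;> simp_all
        · rintro rfl; simp)]
  rw [deg_v]; push_cast; ring

lemma entry_eV_s (l) : ricciMatrix (G2 a b) (eV a b l) (spineE a b) = 1/((b:ℝ)+1) := by
  rw [ricciMatrix, if_neg (by rw [coe_spineE, coe_eV]; simp), coe_spineE, coe_eV]
  rw [sum_ite_one _ (Sum.inl 1 : V2 a b)
    (by intro v; simp only [Sym2.mem_iff]; constructor
        · rintro ⟨h1 | h1, h2 | h2⟩ <;> simp_all
        · rintro rfl; simp)]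
  rw [deg_v]; push_cast; ring

lemma entry_eU_eU (k k') : ricciMatrix (G2 a b) (eU a b k) (eU a b k')
    = if k = k' then -(1/((a:ℝ)+1) + 1) else 1/((a:ℝ)+1) := by
  by_cases hkk : k = k'
  · subst hkk
    rw [ricciMatrix, if_pos rfl, coe_eU, if_pos rfl]
    rw [sum_ite_two _ (Sum.inl 0 : V2 a b) (Sum.inr ⟨0, k⟩ : V2 a b) (by simp) (fun v => Sym2.mem_iff)]
    rw [deg_u, deg_leaf]
    push_cast; norm_num
  · have hne : (s(Sum.inl 0, Sum.inr ⟨0, k⟩) : Sym2 (V2 a b)) ≠ s(Sum.inl 0, Sum.inr ⟨0, k'⟩) := by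
      simp [Sym2.eq_iff, hkk]; exact fun h => hkk (eq_of_heq h)
    rw [ricciMatrix, if_neg (by rw [coe_eU, coe_eU]; exact hne), coe_eU, coe_eU, if_neg hkk]
    rw [sum_ite_one _ (Sum.inl 0 : V2 a b)
      (by intro v; simp only [Sym2.mem_iff]; constructor
          · rintro ⟨h1 | h1, h2 | h2⟩ <;> simp_all <;> exact hkk (eq_of_heq h1).symm
          · rintro rfl; simp)]
    rw [deg_u]; push_cast; ring

lemma entry_eV_eV (l l') : ricciMatrix (G2 a b) (eV a b l) (eV a b l')
    = if l = l' then -(1/((b:ℝ)+1) + 1) else 1/((b:ℝ)+1) := by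
  by_cases hll : l = l'
  · subst hll
    rw [ricciMatrix, if_pos rfl, coe_eV, if_pos rfl]
    rw [sum_ite_two _ (Sum.inl 1 : V2 a b) (Sum.inr ⟨1, l⟩ : V2 a b) (by simp) (fun v => Sym2.mem_iff)]
    rw [deg_v, deg_leaf]
    push_cast; norm_num
  · have hne : (s(Sum.inl 1, Sum.inr ⟨1, l⟩) : Sym2 (V2 a b)) ≠ s(Sum.inl 1, Sum.inr ⟨1, l'⟩) := by
      simp [Sym2.eq_iff, hll]; exact fun h => hll (eq_of_heq h)
    rw [ricciMatrix, if_neg (by rw [coe_eV, coe_eV]; exact hne), coe_eV, coe_eV, if_neg hll]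
    rw [sum_ite_one _ (Sum.inl 1 : V2 a b)
      (by intro v; simp only [Sym2.mem_iff]; constructor
          · rintro ⟨h1 | h1, h2 | h2⟩ <;> simp_all <;> exact hll (eq_of_heq h1).symm
          · rintro rfl; simp)]
    rw [deg_v]; push_cast; ring

lemma entry_eU_eV (k l) : ricciMatrix (G2 a b) (eU a b k) (eV a b l) = 0 := by
  rw [ricciMatrix, if_neg (by rw [coe_eU, coe_eV]; simp), coe_eU, coe_eV]
  rw [sum_ite_zero _ (by intro v; simp only [Sym2.mem_iff]; rintro ⟨h1 | h1, h2 | h2⟩ <;> simp_all)]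

lemma entry_eV_eU (l k) : ricciMatrix (G2 a b) (eV a b l) (eU a b k) = 0 := by
  rw [ricciMatrix, if_neg (by rw [coe_eU, coe_eV]; simp), coe_eU, coe_eV]
  rw [sum_ite_zero _ (by intro v; simp only [Sym2.mem_iff]; rintro ⟨h1 | h1, h2 | h2⟩ <;> simp_all)]

lemma ricci_herm {W : Type*} (G : SimpleGraph W) [Fintype W] [DecidableEq W] :
    (ricciMatrix G).IsHermitian := by
  show (ricciMatrix G)ᴴ = ricciMatrix G
  ext e f
  rw [Matrix.conjTranspose_apply, star_trivial]
  unfold ricciMatrix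
  by_cases h : (f : Sym2 W) = (e : Sym2 W)
  · rw [if_pos h, if_pos h.symm, h]
  · rw [if_neg h, if_neg (fun hh => h hh.symm)]
    exact Finset.sum_congr rfl fun v _ => if_congr and_comm rfl rfl

variable (w : (G2 a b).edgeSet → ℝ)

lemma mulVec_spine : (ricciMatrix (G2 a b) *ᵥ w) (spineE a b) =
    -(1/((a:ℝ)+1) + 1/((b:ℝ)+1)) * w (spineE a b)
      + (1/((a:ℝ)+1)) * (∑ k, w (eU a b k)) + (1/((b:ℝ)+1)) * (∑ l, w (eV a b l)) := by
  show (∑ f, ricciMatrix (G2 a b) (spineE a b) f * w f) = _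
  rw [sum_edges, entry_ss]
  simp only [entry_s_eU, entry_s_eV]
  rw [← Finset.mul_sum, ← Finset.mul_sum]

lemma mulVec_eU (k) : (ricciMatrix (G2 a b) *ᵥ w) (eU a b k) =
    (1/((a:ℝ)+1)) * w (spineE a b) + (1/((a:ℝ)+1)) * (∑ k', w (eU a b k'))
      - (1 + 2/((a:ℝ)+1)) * w (eU a b k) := by
  show (∑ f, ricciMatrix (G2 a b) (eU a b k) f * w f) = _
  rw [sum_edges, entry_eU_s]
  have h1 : ∀ k', ricciMatrix (G2 a b) (eU a b k) (eU a b k') * w (eU a b k')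
      = (1/((a:ℝ)+1)) * w (eU a b k')
        + (if k = k' then (-(1 + 2/((a:ℝ)+1))) * w (eU a b k') else 0) := by
    intro k'; rw [entry_eU_eU]
    by_cases h : k = k'
    · rw [if_pos h, if_pos h]; ring
    · rw [if_neg h, if_neg h, add_zero]
  rw [Finset.sum_congr rfl (fun k' _ => h1 k'), Finset.sum_add_distrib, Finset.sum_ite_eq,
    if_pos (Finset.mem_univ k)]
  simp only [entry_eU_eV, zero_mul, Finset.sum_const_zero, ← Finset.mul_sum]
  ring

lemma mulVec_eV (l) : (ricciMatrix (G2 a b) *ᵥ w) (eV a b l) =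
    (1/((b:ℝ)+1)) * w (spineE a b) + (1/((b:ℝ)+1)) * (∑ l', w (eV a b l'))
      - (1 + 2/((b:ℝ)+1)) * w (eV a b l) := by
  show (∑ f, ricciMatrix (G2 a b) (eV a b l) f * w f) = _
  rw [sum_edges, entry_eV_s]
  have h1 : ∀ l', ricciMatrix (G2 a b) (eV a b l) (eV a b l') * w (eV a b l')
      = (1/((b:ℝ)+1)) * w (eV a b l')
        + (if l = l' then (-(1 + 2/((b:ℝ)+1))) * w (eV a b l') else 0) := by
    intro l'; rw [entry_eV_eV]
    by_cases h : l = l'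
    · rw [if_pos h, if_pos h]; ring
    · rw [if_neg h, if_neg h, add_zero]
  rw [Finset.sum_congr rfl (fun l' _ => h1 l'), Finset.sum_add_distrib, Finset.sum_ite_eq,
    if_pos (Finset.mem_univ l)]
  simp only [entry_eV_eU, zero_mul, Finset.sum_const_zero, ← Finset.mul_sum]
  ring

lemma quadform : w ⬝ᵥ (ricciMatrix (G2 a b) *ᵥ w) =
    -(1/((a:ℝ)+1) + 1/((b:ℝ)+1)) * (w (spineE a b))^2
      + 2 * (1/((a:ℝ)+1)) * w (spineE a b) * (∑ k, w (eU a b k))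
      + 2 * (1/((b:ℝ)+1)) * w (spineE a b) * (∑ l, w (eV a b l))
      - (1 + 2/((a:ℝ)+1)) * (∑ k, (w (eU a b k))^2)
      + (1/((a:ℝ)+1)) * (∑ k, w (eU a b k))^2
      - (1 + 2/((b:ℝ)+1)) * (∑ l, (w (eV a b l))^2)
      + (1/((b:ℝ)+1)) * (∑ l, w (eV a b l))^2 := by
  show (∑ e, w e * (ricciMatrix (G2 a b) *ᵥ w) e) = _
  rw [sum_edges, mulVec_spine]
  have h1 : ∀ k, w (eU a b k) * (ricciMatrix (G2 a b) *ᵥ w) (eU a b k)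
      = ((1/((a:ℝ)+1)) * w (spineE a b) + (1/((a:ℝ)+1)) * (∑ k', w (eU a b k'))) * w (eU a b k)
        - (1 + 2/((a:ℝ)+1)) * (w (eU a b k))^2 := by
    intro k; rw [mulVec_eU]; ring
  have h2 : ∀ l, w (eV a b l) * (ricciMatrix (G2 a b) *ᵥ w) (eV a b l)
      = ((1/((b:ℝ)+1)) * w (spineE a b) + (1/((b:ℝ)+1)) * (∑ l', w (eV a b l'))) * w (eV a b l)
        - (1 + 2/((b:ℝ)+1)) * (w (eV a b l))^2 := by
    intro l; rw [mulVec_eV]; ring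
  rw [Finset.sum_congr rfl (fun k _ => h1 k), Finset.sum_congr rfl (fun l _ => h2 l),
    Finset.sum_sub_distrib, Finset.sum_sub_distrib]
  simp only [← Finset.sum_mul, ← Finset.mul_sum]
  ring

lemma key_id (A B z X Y Sx Sy : ℝ) (hA : 1 ≤ A) (hB : 1 ≤ B) :
    -(-(1/(A+1) + 1/(B+1)) * z^2
      + 2 * (1/(A+1)) * z * X + 2 * (1/(B+1)) * z * Y
      - (1 + 2/(A+1)) * Sx + (1/(A+1)) * X^2
      - (1 + 2/(B+1)) * Sy + (1/(B+1)) * Y^2)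
    = (1 + 2/(A+1)) * ((A*Sx - X^2)/A) + (1 + 2/(B+1)) * ((B*Sy - Y^2)/B)
      + (1/(A+1)) * (3*X - A*z)^2 / (3*A) + (1/(B+1)) * (3*Y - B*z)^2 / (3*B)
      + ((4*(1/(A+1) + 1/(B+1)) - 2)/3) * z^2 := by
  have hA0 : A ≠ 0 := by linarith
  have hB0 : B ≠ 0 := by linarith
  have hA1 : A + 1 ≠ 0 := by linarith
  have hB1 : B + 1 ≠ 0 := by linarith
  field_simp
  ring

lemma key_le (A B z X Y Sx Sy : ℝ) (hA : 1 ≤ A) (hB : 1 ≤ B)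
    (hX : X^2 ≤ A*Sx) (hY : Y^2 ≤ B*Sy)
    (hc : 1/2 ≤ 1/(A+1) + 1/(B+1)) :
    -(1/(A+1) + 1/(B+1)) * z^2
      + 2 * (1/(A+1)) * z * X + 2 * (1/(B+1)) * z * Y
      - (1 + 2/(A+1)) * Sx + (1/(A+1)) * X^2
      - (1 + 2/(B+1)) * Sy + (1/(B+1)) * Y^2 ≤ 0 := by
  have hA1 : (0:ℝ) < A + 1 := by linarith
  have hB1 : (0:ℝ) < B + 1 := by linarith
  have h1 : 0 ≤ (1 + 2/(A+1)) * ((A*Sx - X^2)/A) := by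
    apply mul_nonneg (by positivity) (div_nonneg (by linarith) (by linarith))
  have h2 : 0 ≤ (1 + 2/(B+1)) * ((B*Sy - Y^2)/B) := by
    apply mul_nonneg (by positivity) (div_nonneg (by linarith) (by linarith))
  have h3 : 0 ≤ (1/(A+1)) * (3*X - A*z)^2 / (3*A) := by positivity
  have h4 : 0 ≤ (1/(B+1)) * (3*Y - B*z)^2 / (3*B) := by positivity
  have h5 : 0 ≤ ((4*(1/(A+1) + 1/(B+1)) - 2)/3) * z^2 := by
    apply mul_nonneg (by linarith) (sq_nonneg z)
  have := key_id A B z X Y Sx Sy hA hB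
  linarith

lemma key_lt (A B z X Y Sx Sy : ℝ) (hA : 1 ≤ A) (hB : 1 ≤ B)
    (hX : X^2 ≤ A*Sx) (hY : Y^2 ≤ B*Sy)
    (hc : 1/2 < 1/(A+1) + 1/(B+1))
    (hnz : z ≠ 0 ∨ 0 < Sx ∨ 0 < Sy) :
    -(1/(A+1) + 1/(B+1)) * z^2
      + 2 * (1/(A+1)) * z * X + 2 * (1/(B+1)) * z * Y
      - (1 + 2/(A+1)) * Sx + (1/(A+1)) * X^2
      - (1 + 2/(B+1)) * Sy + (1/(B+1)) * Y^2 < 0 := by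
  have hA1 : (0:ℝ) < A + 1 := by linarith
  have hB1 : (0:ℝ) < B + 1 := by linarith
  have h1 : 0 ≤ (1 + 2/(A+1)) * ((A*Sx - X^2)/A) := by
    apply mul_nonneg (by positivity) (div_nonneg (by linarith) (by linarith))
  have h2 : 0 ≤ (1 + 2/(B+1)) * ((B*Sy - Y^2)/B) := by
    apply mul_nonneg (by positivity) (div_nonneg (by linarith) (by linarith))
  have h3 : 0 ≤ (1/(A+1)) * (3*X - A*z)^2 / (3*A) := by positivity
  have h4 : 0 ≤ (1/(B+1)) * (3*Y - B*z)^2 / (3*B) := by positivity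
  have h5 : 0 ≤ ((4*(1/(A+1) + 1/(B+1)) - 2)/3) * z^2 := by
    apply mul_nonneg (by linarith) (sq_nonneg z)
  have hid := key_id A B z X Y Sx Sy hA hB
  by_cases hz : z = 0
  · rcases hnz with hz' | hSx | hSy
    · exact absurd hz hz'
    · subst hz
      rcases lt_or_eq_of_le hX with hlt | heq
      · have h1' : 0 < (1 + 2/(A+1)) * ((A*Sx - X^2)/A) := by
          apply mul_pos (by positivity) (div_pos (by linarith) (by linarith))
        linarith
      · have hX2 : 0 < X^2 := by rw [heq]; positivity
        have h3' : 0 < (1/(A+1)) * (3*X - A*0)^2 / (3*A) := by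
          have : (3*X - A*0)^2 = 9 * X^2 := by ring
          rw [this]
          positivity
        linarith
    · subst hz
      rcases lt_or_eq_of_le hY with hlt | heq
      · have h2' : 0 < (1 + 2/(B+1)) * ((B*Sy - Y^2)/B) := by
          apply mul_pos (by positivity) (div_pos (by linarith) (by linarith))
        linarith
      · have hY2 : 0 < Y^2 := by rw [heq]; positivity
        have h4' : 0 < (1/(B+1)) * (3*Y - B*0)^2 / (3*B) := by
          have : (3*Y - B*0)^2 = 9 * Y^2 := by ring
          rw [this]
          positivity
        linarith
  · have h5' : 0 < ((4*(1/(A+1) + 1/(B+1)) - 2)/3) * z^2 := by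
      apply mul_pos (by linarith) (by positivity)
    linarith

variable {a b : ℕ}

lemma cardU : ((Finset.univ : Finset (Fin (![a, b] 0))).card : ℝ) = a := by rw [Finset.card_univ, Fintype.card_fin]; rfl
lemma cardV : ((Finset.univ : Finset (Fin (![a, b] 1))).card : ℝ) = b := by rw [Finset.card_univ, Fintype.card_fin]; rfl

lemma cauchyU (w : (G2 a b).edgeSet → ℝ) :
    (∑ k, w (eU a b k))^2 ≤ (a:ℝ) * ∑ k, (w (eU a b k))^2 := by
  have := sq_sum_le_card_mul_sum_sq (s := (Finset.univ : Finset (Fin (![a, b] 0))))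
    (f := fun k => w (eU a b k))
  rwa [cardU] at this

lemma cauchyV (w : (G2 a b).edgeSet → ℝ) :
    (∑ l, w (eV a b l))^2 ≤ (b:ℝ) * ∑ l, (w (eV a b l))^2 := by
  have := sq_sum_le_card_mul_sum_sq (s := (Finset.univ : Finset (Fin (![a, b] 1))))
    (f := fun l => w (eV a b l))
  rwa [cardV] at this

lemma quad_le (ha : 1 ≤ a) (hb : 1 ≤ b)
    (hc : 1/2 ≤ 1/((a:ℝ)+1) + 1/((b:ℝ)+1)) (w : (G2 a b).edgeSet → ℝ) :
    w ⬝ᵥ (ricciMatrix (G2 a b) *ᵥ w) ≤ 0 := by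
  rw [quadform]
  have hA : (1:ℝ) ≤ a := by exact_mod_cast ha
  have hB : (1:ℝ) ≤ b := by exact_mod_cast hb
  exact key_le _ _ _ _ _ _ _ hA hB (cauchyU w) (cauchyV w) hc

lemma quad_lt (ha : 1 ≤ a) (hb : 1 ≤ b)
    (hc : 1/2 < 1/((a:ℝ)+1) + 1/((b:ℝ)+1)) (w : (G2 a b).edgeSet → ℝ) (hw : w ≠ 0) :
    w ⬝ᵥ (ricciMatrix (G2 a b) *ᵥ w) < 0 := by
  rw [quadform]
  have hA : (1:ℝ) ≤ a := by exact_mod_cast ha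
  have hB : (1:ℝ) ≤ b := by exact_mod_cast hb
  apply key_lt _ _ _ _ _ _ _ hA hB (cauchyU w) (cauchyV w) hc
  obtain ⟨e, he⟩ := Function.ne_iff.mp hw
  rcases edge_classify a b e with h | ⟨k, h⟩ | ⟨l, h⟩
  · subst h; exact Or.inl he
  · subst h
    refine Or.inr (Or.inl (Finset.sum_pos' (fun k' _ => sq_nonneg _)
      ⟨k, Finset.mem_univ k, by rw [sq]; exact mul_self_pos.mpr he⟩))
  · subst h
    refine Or.inr (Or.inr (Finset.sum_pos' (fun l' _ => sq_nonneg _)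
      ⟨l, Finset.mem_univ l, by rw [sq]; exact mul_self_pos.mpr he⟩))

noncomputable def w0 : (G2 a b).edgeSet → ℝ := fun e => if e = spineE a b then 3 else 1

lemma w0_spine : w0 (spineE a b) = 3 := if_pos rfl
lemma w0_eU (k) : w0 (eU a b k) = 1 := by
  apply if_neg
  intro h
  have : (s(Sum.inl 0, Sum.inr ⟨0, k⟩) : Sym2 (V2 a b)) = s(Sum.inl 0, Sum.inl 1) :=
    congrArg Subtype.val h
  simp [Sym2.eq_iff] at this
lemma w0_eV (l) : w0 (eV a b l) = 1 := by
  apply if_neg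
  intro h
  have : (s(Sum.inl 1, Sum.inr ⟨1, l⟩) : Sym2 (V2 a b)) = s(Sum.inl 0, Sum.inl 1) :=
    congrArg Subtype.val h
  simp [Sym2.eq_iff] at this

lemma w0_ne : (w0 : (G2 a b).edgeSet → ℝ) ≠ 0 := by
  intro h
  have := congrFun h (spineE a b)
  rw [w0_spine] at this
  norm_num at this

lemma sum_w0_U : (∑ k, w0 (eU a b k)) = (a:ℝ) := by
  rw [Finset.sum_congr rfl (fun k _ => w0_eU k), Finset.sum_const, nsmul_eq_mul, mul_one, cardU]
lemma sum_w0_V : (∑ l, w0 (eV a b l)) = (b:ℝ) := by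
  rw [Finset.sum_congr rfl (fun l _ => w0_eV l), Finset.sum_const, nsmul_eq_mul, mul_one, cardV]

lemma quad_w0 : (w0 : (G2 a b).edgeSet → ℝ) ⬝ᵥ (ricciMatrix (G2 a b) *ᵥ w0)
    = 6 - 12 * (1/((a:ℝ)+1) + 1/((b:ℝ)+1)) := by
  rw [quadform]
  rw [w0_spine, sum_w0_U, sum_w0_V]
  have h1 : (∑ k, (w0 (eU a b k))^2) = (a:ℝ) := by
    rw [Finset.sum_congr rfl (fun k _ => by rw [w0_eU k, one_pow]), Finset.sum_const,
      nsmul_eq_mul, mul_one, cardU]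
  have h2 : (∑ l, (w0 (eV a b l))^2) = (b:ℝ) := by
    rw [Finset.sum_congr rfl (fun l _ => by rw [w0_eV l, one_pow]), Finset.sum_const,
      nsmul_eq_mul, mul_one, cardV]
  rw [h1, h2]
  have hA1 : (a:ℝ) + 1 ≠ 0 := by positivity
  have hB1 : (b:ℝ) + 1 ≠ 0 := by positivity
  field_simp
  ring

lemma w0_ker (hc : 1/((a:ℝ)+1) + 1/((b:ℝ)+1) = 1/2) :
    ricciMatrix (G2 a b) *ᵥ (w0 : (G2 a b).edgeSet → ℝ) = 0 := by
  funext e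
  have hA1 : (a:ℝ) + 1 ≠ 0 := by positivity
  have hB1 : (b:ℝ) + 1 ≠ 0 := by positivity
  rcases edge_classify a b e with h | ⟨k, h⟩ | ⟨l, h⟩ <;> subst h
  · rw [mulVec_spine, w0_spine, sum_w0_U, sum_w0_V]
    show _ = (0:ℝ)
    have : -(1/((a:ℝ)+1) + 1/((b:ℝ)+1)) * 3 + (1/((a:ℝ)+1)) * a + (1/((b:ℝ)+1)) * b
        = 2 - 4 * (1/((a:ℝ)+1) + 1/((b:ℝ)+1)) := by
      field_simp
      ring
    rw [this, hc]
    norm_num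
  · rw [mulVec_eU, w0_spine, sum_w0_U, w0_eU]
    show _ = (0:ℝ)
    field_simp
    ring
  · rw [mulVec_eV, w0_spine, sum_w0_V, w0_eV]
    show _ = (0:ℝ)
    field_simp
    ring

end DS


/-- **Double stars.**  For `a, b ≥ 1`, the double star `T_2(a,b)` has
`λ_max < 0` iff `(a−1)(b−1) < 4` and `λ_max = 0` iff `(a−1)(b−1) = 4`. -/
theorem doubleStar_lambdaMax (a b : ℕ) (ha : 1 ≤ a) (hb : 1 ≤ b) :
    (lambdaMax (ricciMatrix (caterpillar 2 ![a, b])) < 0 ↔ (a - 1) * (b - 1) < 4) ∧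
    (lambdaMax (ricciMatrix (caterpillar 2 ![a, b])) = 0 ↔ (a - 1) * (b - 1) = 4) := by
  have hherm : (ricciMatrix (DS.G2 a b)).IsHermitian := DS.ricci_herm _
  have hne : Nonempty ((DS.G2 a b).edgeSet) := ⟨DS.spineE a b⟩
  have hA1 : (0:ℝ) < (a:ℝ) + 1 := by positivity
  have hB1 : (0:ℝ) < (b:ℝ) + 1 := by positivity
  have hcast : (((a - 1) * (b - 1) : ℕ) : ℝ) = ((a:ℝ) - 1) * ((b:ℝ) - 1) := by
    push_cast [Nat.cast_sub ha, Nat.cast_sub hb]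
    ring
  have hsign : 1/((a:ℝ)+1) + 1/((b:ℝ)+1) - 1/2
      = (4 - (((a - 1) * (b - 1) : ℕ) : ℝ)) / (2 * ((a:ℝ)+1) * ((b:ℝ)+1)) := by
    rw [hcast]
    field_simp
    ring
  rcases lt_trichotomy ((a - 1) * (b - 1)) 4 with hcase | hcase | hcase
  · have h4 : (0:ℝ) < 4 - (((a - 1) * (b - 1) : ℕ) : ℝ) := by
      have : (((a - 1) * (b - 1) : ℕ) : ℝ) < 4 := by exact_mod_cast hcase
      linarith
    have hpos : (0:ℝ) < (4 - (((a - 1) * (b - 1) : ℕ) : ℝ)) / (2 * ((a:ℝ)+1) * ((b:ℝ)+1)) :=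
      div_pos h4 (by positivity)
    rw [← hsign] at hpos
    have hc : 1/2 < 1/((a:ℝ)+1) + 1/((b:ℝ)+1) := by linarith
    have hL : lambdaMax (ricciMatrix (DS.G2 a b)) < 0 :=
      Spec.lambdaMax_neg hherm (fun w hw => DS.quad_lt ha hb hc w hw)
    exact ⟨⟨fun _ => hcase, fun _ => hL⟩, ⟨fun h0 => absurd h0 hL.ne, fun h4' => by omega⟩⟩
  · have h4 : (4 - (((a - 1) * (b - 1) : ℕ) : ℝ)) = 0 := by
      rw [hcase]; norm_num
    have hc : 1/((a:ℝ)+1) + 1/((b:ℝ)+1) = 1/2 := by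
      rw [h4] at hsign
      rw [zero_div] at hsign
      linarith
    have hL : lambdaMax (ricciMatrix (DS.G2 a b)) = 0 :=
      Spec.lambdaMax_zero hherm (DS.quad_le ha hb (le_of_eq hc.symm)) DS.w0_ne (DS.w0_ker hc)
    exact ⟨⟨fun hlt => absurd hL hlt.ne, fun hlt => by omega⟩, ⟨fun _ => hcase, fun _ => hL⟩⟩
  · have h4 : (((a - 1) * (b - 1) : ℕ) : ℝ) > 4 := by exact_mod_cast hcase
    have hneg : (4 - (((a - 1) * (b - 1) : ℕ) : ℝ)) / (2 * ((a:ℝ)+1) * ((b:ℝ)+1)) < 0 :=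
      div_neg_of_neg_of_pos (by linarith) (by positivity)
    rw [← hsign] at hneg
    have hc : 1/((a:ℝ)+1) + 1/((b:ℝ)+1) < 1/2 := by linarith
    have hL : 0 < lambdaMax (ricciMatrix (DS.G2 a b)) := by
      apply Spec.lambdaMax_pos hherm
      exact ⟨DS.w0, by rw [DS.quad_w0]; linarith⟩
    exact ⟨⟨fun hlt => absurd hlt (by linarith), fun hlt => by omega⟩,
      ⟨fun h0 => absurd h0 (by linarith), fun h4' => by omega⟩⟩
end

section
/- Every finite tree that is not a caterpillar contains a connected subtree isomorphic to S_3^2. -/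
open Finset Matrix

/-- A caterpillar is a tree such that deleting all leaves (vertices of degree one)
leaves a path. -/
def IsCaterpillar {V : Type*} (G : SimpleGraph V) : Prop :=
  G.IsTree ∧ ∃ n : ℕ,
    Nonempty (G.induce {v : V | (G.neighborSet v).ncard ≠ 1} ≃g SimpleGraph.pathGraph n)

/-- The defining edge list of `S_3^2`: center `0`, middle vertices `1, 2, 3`,
leaves `4, 5, 6`. -/
def s32Edges : List (Fin 7 × Fin 7) := [(0, 1), (0, 2), (0, 3), (1, 4), (2, 5), (3, 6)]

/-- The tree `S_3^2`, obtained by subdividing each edge of the three-edge star once. -/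
def S32 : SimpleGraph (Fin 7) := SimpleGraph.fromRel (fun a b => (a, b) ∈ s32Edges)

instance : DecidableRel S32.Adj := fun a b =>
  decidable_of_iff (a ≠ b ∧ ((a, b) ∈ s32Edges ∨ (b, a) ∈ s32Edges))
    ((SimpleGraph.fromRel_adj (fun a b => (a, b) ∈ s32Edges) a b).symm.trans
      (by constructor <;> (intro h; exact h)))

section CaterpillarAux

open SimpleGraph

namespace Caterpillar

variable {V : Type*} {G : SimpleGraph V}


variable {V : Type*} {G : SimpleGraph V}

lemma exists_walk_to_getVert {u v : V} (p : G.Walk u v) (i : ℕ) :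
    ∃ q : G.Walk u (p.getVert i), q.length ≤ i := by
  induction p generalizing i with
  | nil => exact ⟨Walk.nil, Nat.zero_le _⟩
  | cons h q ih =>
    cases i with
    | zero => exact ⟨Walk.nil, le_rfl⟩
    | succ i =>
      obtain ⟨r, hr⟩ := ih i
      exact ⟨Walk.cons h r, by simpa using Nat.succ_le_succ hr⟩

lemma exists_walk_from_getVert {u v : V} (p : G.Walk u v) {j : ℕ} (hj : j ≤ p.length) :
    ∃ q : G.Walk (p.getVert j) v, q.length ≤ p.length - j := by
  obtain ⟨q, hq⟩ := exists_walk_to_getVert p.reverse (p.length - j)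
  refine ⟨(q.copy rfl (by rw [Walk.getVert_reverse, Nat.sub_sub_self hj])).reverse, ?_⟩
  simpa using hq

lemma length_eq_dist_of_isPath (hG : G.IsAcyclic) {u v : V} {p : G.Walk u v}
    (hp : p.IsPath) : p.length = G.dist u v := by
  obtain ⟨q, hq, hql⟩ := (p.reachable).exists_path_of_dist
  have := hG.path_unique ⟨p, hp⟩ ⟨q, hq⟩
  rw [show p = q from congrArg Subtype.val this]
  exact hql

lemma getVert_inj_of_lt (hG : G.IsAcyclic) {u v : V} {p : G.Walk u v} (hp : p.IsPath)
    {i j : ℕ} (hij : i < j) (hj : j ≤ p.length) : p.getVert i ≠ p.getVert j := by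
  intro heq
  obtain ⟨q1, hq1⟩ := exists_walk_to_getVert p i
  obtain ⟨q2, hq2⟩ := exists_walk_from_getVert p hj
  have hd : G.dist u v ≤ i + (p.length - j) := by
    calc G.dist u v ≤ (q1.append (q2.copy heq.symm rfl)).length := SimpleGraph.dist_le _
    _ = q1.length + q2.length := by rw [Walk.length_append, Walk.length_copy]
    _ ≤ i + (p.length - j) := Nat.add_le_add hq1 hq2
  rw [← length_eq_dist_of_isPath hG hp] at hd
  omega

lemma adj_getVert_consecutive (hG : G.IsAcyclic) {u v : V} {p : G.Walk u v} (hp : p.IsPath)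
    {i j : ℕ} (hij : i < j) (hj : j ≤ p.length)
    (hadj : G.Adj (p.getVert i) (p.getVert j)) : j = i + 1 := by
  obtain ⟨q1, hq1⟩ := exists_walk_to_getVert p i
  obtain ⟨q2, hq2⟩ := exists_walk_from_getVert p hj
  have hd : G.dist u v ≤ i + 1 + (p.length - j) := by
    calc G.dist u v ≤ (q1.append (Walk.cons hadj q2)).length := SimpleGraph.dist_le _
    _ = q1.length + (q2.length + 1) := by rw [Walk.length_append, Walk.length_cons]
    _ ≤ i + 1 + (p.length - j) := by omega
  rw [← length_eq_dist_of_isPath hG hp] at hd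
  omega



lemma no_triangle (hG : G.IsAcyclic) {u x y : V} (h1 : G.Adj u x) (h2 : G.Adj x y)
    (h3 : G.Adj u y) : False := by
  have hp2 : (Walk.cons h1 (Walk.cons h2 Walk.nil)).IsPath := by
    simp [Walk.isPath_def, h1.ne, h2.ne, h3.ne]
  have := hG.path_unique (Path.singleton h3) ⟨Walk.cons h1 (Walk.cons h2 Walk.nil), hp2⟩
  have := congrArg (fun q : G.Path u y => q.1.length) this
  simp [Path.singleton] at this

lemma no_square (hG : G.IsAcyclic) {u a b x : V} (hua : G.Adj u a) (hax : G.Adj a x)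
    (hub : G.Adj u b) (hbx : G.Adj b x) (hab : a ≠ b) (hux : u ≠ x) : False := by
  have hp1 : (Walk.cons hua (Walk.cons hax Walk.nil)).IsPath := by
    simp [Walk.isPath_def, hua.ne, hax.ne, hux]
  have hp2 : (Walk.cons hub (Walk.cons hbx Walk.nil)).IsPath := by
    simp [Walk.isPath_def, hub.ne, hbx.ne, hux]
  have := hG.path_unique ⟨_, hp1⟩ ⟨_, hp2⟩
  have := congrArg (fun q : G.Path u x => q.1.support) this
  simp [Walk.support] at this
  exact hab this

/-- Every vertex on a path between two non-leaves is a non-leaf. -/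
lemma internal_mem [Finite V] (hG : G.IsAcyclic) {u v x : V} {p : G.Walk u v} (hp : p.IsPath)
    (hx : x ∈ p.support) (hxu : x ≠ u) (hxv : x ≠ v) :
    2 ≤ (G.neighborSet x).ncard := by
  obtain ⟨i, hi, hil⟩ := Walk.mem_support_iff_exists_getVert.mp hx
  have h0 : i ≠ 0 := by rintro rfl; simp at hi; exact hxu hi.symm
  have hl : i ≠ p.length := by rintro rfl; simp at hi; exact hxv hi.symm
  have hprev : G.Adj (p.getVert (i-1)) (p.getVert i) := by
    have := p.adj_getVert_succ (i := i - 1) (by omega)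
    rwa [show i - 1 + 1 = i by omega] at this
  have hnext : G.Adj (p.getVert i) (p.getVert (i+1)) := p.adj_getVert_succ (by omega)
  have hne : p.getVert (i-1) ≠ p.getVert (i+1) :=
    getVert_inj_of_lt hG hp (by omega) (by omega)
  have hsub : {p.getVert (i-1), p.getVert (i+1)} ⊆ G.neighborSet x := by
    rw [← hi]
    rintro y (rfl | rfl)
    · exact hprev.symm
    · exact hnext
  calc 2 = ({p.getVert (i-1), p.getVert (i+1)} : Set V).ncard := (Set.ncard_pair hne).symm
  _ ≤ (G.neighborSet x).ncard := Set.ncard_le_ncard hsub (Set.toFinite _)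

lemma exists_boundary {S : Set V} {a w : V} (p : G.Walk a w) (ha : a ∈ S) (hw : w ∉ S) :
    ∃ x y, x ∈ S ∧ y ∉ S ∧ G.Adj x y := by
  induction p with
  | nil => exact absurd ha hw
  | @cons a' b' w' h q ih =>
    by_cases hb : b' ∈ S
    · exact ih hb hw
    · exact ⟨a', b', ha, hb, h⟩

lemma reachable_induce_of_support {S : Set V} {u v : V} (p : G.Walk u v)
    (hs : ∀ x ∈ p.support, x ∈ S) :
    (G.induce S).Reachable ⟨u, hs u p.start_mem_support⟩ ⟨v, hs v p.end_mem_support⟩ := by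
  induction p with
  | nil => rfl
  | @cons a b c h q ih =>
    have hb : b ∈ S := hs b (by simp)
    have h1 : (G.induce S).Adj ⟨a, hs a (Walk.cons h q).start_mem_support⟩ ⟨b, hb⟩ := h
    exact (h1.reachable).trans (by
      have := ih (fun x hx => hs x (by simp [hx]))
      convert this using 2)

/-- A vertex adjacent to a non-leaf has a second neighbor. -/
lemma second_neighbor {a v : V} [Fintype V] (hadj : G.Adj a v)
    (ha : (G.neighborSet a).ncard ≠ 1) : ∃ a', G.Adj a a' ∧ a' ≠ v := by
  by_contra hc
  push_neg at hc
  apply ha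
  rw [show G.neighborSet a = {v} from ?_, Set.ncard_singleton]
  ext y
  simp only [mem_neighborSet, Set.mem_singleton_iff]
  exact ⟨fun h => hc y h, fun h => h ▸ hadj⟩



lemma isCaterpillar_of_no_spider {V : Type*} {G : SimpleGraph V} [Fintype V] (hT : G.IsTree)
    (hv : ¬ ∃ v a b c : V, G.Adj v a ∧ G.Adj v b ∧ G.Adj v c ∧ a ≠ b ∧ a ≠ c ∧ b ≠ c ∧
      (G.neighborSet a).ncard ≠ 1 ∧ (G.neighborSet b).ncard ≠ 1 ∧
      (G.neighborSet c).ncard ≠ 1) :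
    IsCaterpillar G := by
  classical
  refine ⟨hT, ?_⟩
  set D : Set V := {v : V | (G.neighborSet v).ncard ≠ 1} with hD
  by_cases hne : Nonempty ↥D
  case neg =>
    refine ⟨0, ⟨?_⟩⟩
    have hE : IsEmpty ↥D := not_nonempty_iff.mp hne
    exact { toEquiv := Equiv.equivOfIsEmpty _ _,
            map_rel_iff' := by intro a; exact isEmptyElim a }
  haveI := hne
  obtain ⟨u0⟩ := hne
  -- the induced graph on non-leaves
  have hHconn : (G.induce D).Connected := by
    refine Connected.mk fun x y => ?_
    obtain ⟨p, hp, -⟩ := hT.isConnected.exists_path_of_dist x.val y.val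
    have hsub : ∀ z ∈ p.support, z ∈ D := by
      intro z hz
      by_cases hzx : z = x.val
      · exact hzx ▸ x.2
      by_cases hzy : z = y.val
      · exact hzy ▸ y.2
      · have := internal_mem hT.IsAcyclic hp hz hzx hzy
        simp only [hD, Set.mem_setOf_eq]
        omega
    exact reachable_induce_of_support p hsub
  have hHac : (G.induce D).IsAcyclic := by
    intro w c hc
    exact hT.IsAcyclic (c.map (Embedding.induce D).toHom) (hc.map Subtype.val_injective)
  have hdeg : ∀ (x a b c : ↥D), (G.induce D).Adj x a → (G.induce D).Adj x b →
      (G.induce D).Adj x c → a ≠ b → a ≠ c → b ≠ c → False := by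
    intro x a b c hxa hxb hxc hab hac hbc
    exact hv ⟨x.val, a.val, b.val, c.val, hxa, hxb, hxc,
      fun h => hab (Subtype.ext h), fun h => hac (Subtype.ext h),
      fun h => hbc (Subtype.ext h), a.2, b.2, c.2⟩
  -- a longest path in the induced graph
  set PS : Set ℕ := {n | ∃ (x y : ↥D) (p : (G.induce D).Walk x y), p.IsPath ∧ p.length = n}
    with hPS
  have h0 : (0 : ℕ) ∈ PS := ⟨u0, u0, Walk.nil, by simp, rfl⟩
  have hbdd : BddAbove PS := by
    refine ⟨Fintype.card ↥D, ?_⟩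
    rintro n ⟨a, b, q, hq, rfl⟩
    exact le_of_lt hq.length_lt
  set N := sSup PS with hNdef
  obtain ⟨x, y, p, hp, hl⟩ : N ∈ PS := Nat.sSup_mem ⟨0, h0⟩ hbdd
  have hmax : ∀ (a b : ↥D) (q : (G.induce D).Walk a b), q.IsPath → q.length ≤ N :=
    fun a b q hq => le_csSup hbdd ⟨a, b, q, hq, rfl⟩
  -- the longest path is hamiltonian
  have hall : ∀ w : ↥D, w ∈ p.support := by
    by_contra hc
    push_neg at hc
    obtain ⟨w, hw⟩ := hc
    obtain ⟨r⟩ := hHconn.preconnected x w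
    obtain ⟨s, t, hs, ht, hadj⟩ :=
      exists_boundary (S := {z | z ∈ p.support}) r p.start_mem_support hw
    obtain ⟨i, hiv, hil⟩ := Walk.mem_support_iff_exists_getVert.mp hs
    by_cases i0 : i = 0
    · have hsx : s = x := by rw [← hiv, i0, Walk.getVert_zero]
      have hq : (Walk.cons (hsx ▸ hadj.symm) p).IsPath :=
        (Walk.cons_isPath_iff _ _).mpr ⟨hp, ht⟩
      have := hmax _ _ _ hq
      rw [Walk.length_cons, hl] at this
      omega
    by_cases ilen : i = p.length
    · have hsy : s = y := by rw [← hiv, ilen, Walk.getVert_length]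
      have htr : t ∉ p.reverse.support := by rwa [Walk.support_reverse, List.mem_reverse]
      have hq : (Walk.cons (hsy ▸ hadj.symm) p.reverse).IsPath :=
        (Walk.cons_isPath_iff _ _).mpr ⟨hp.reverse, htr⟩
      have := hmax _ _ _ hq
      rw [Walk.length_cons, Walk.length_reverse, hl] at this
      omega
    · have hprev : (G.induce D).Adj s (p.getVert (i-1)) := by
        have := p.adj_getVert_succ (i := i - 1) (by omega)
        rw [show i - 1 + 1 = i by omega, hiv] at this
        exact this.symm
      have hnext : (G.induce D).Adj s (p.getVert (i+1)) := by
        have := p.adj_getVert_succ (i := i) (by omega)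
        rwa [hiv] at this
      have hpn : p.getVert (i-1) ≠ p.getVert (i+1) :=
        getVert_inj_of_lt hHac hp (by omega) (by omega)
      have hmemprev : p.getVert (i-1) ∈ p.support :=
        Walk.mem_support_iff_exists_getVert.mpr ⟨i-1, rfl, by omega⟩
      have hmemnext : p.getVert (i+1) ∈ p.support :=
        Walk.mem_support_iff_exists_getVert.mpr ⟨i+1, rfl, by omega⟩
      exact hdeg s _ _ t hprev hnext hadj hpn
        (fun h => ht (h ▸ hmemprev)) (fun h => ht (h ▸ hmemnext))
  have hnodup := hp.support_nodup
  have hcard : Fintype.card ↥D = N + 1 := by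
    have huniv : p.support.toFinset = Finset.univ := by
      ext w; simp [hall w]
    calc Fintype.card ↥D = Finset.univ.card := rfl
    _ = p.support.toFinset.card := by rw [huniv]
    _ = p.support.length := List.toFinset_card_of_nodup hnodup
    _ = N + 1 := by rw [Walk.length_support, hl]
  refine ⟨N + 1, ⟨?_⟩⟩
  have hinj : Function.Injective (fun i : Fin (N+1) => p.getVert i.val) := by
    intro i j hij
    rcases lt_trichotomy i.val j.val with h | h | h
    · exact absurd hij (getVert_inj_of_lt hHac hp h (by rw [hl]; omega))
    · exact Fin.ext h
    · exact absurd hij.symm (getVert_inj_of_lt hHac hp h (by rw [hl]; omega))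
  have hbij : Function.Bijective (fun i : Fin (N+1) => p.getVert i.val) :=
    (Fintype.bijective_iff_injective_and_card _).mpr ⟨hinj, by simp [hcard]⟩
  refine SimpleGraph.Iso.symm
    { toEquiv := Equiv.ofBijective _ hbij, map_rel_iff' := ?_ }
  intro i j
  simp only [Equiv.ofBijective_apply, pathGraph_adj]
  constructor
  · intro h
    rcases lt_trichotomy i.val j.val with hlt | heq | hlt
    · left
      exact (adj_getVert_consecutive hHac hp hlt (by rw [hl]; omega) h).symm
    · exact absurd (congrArg (fun k => p.getVert k) heq) h.ne
    · right
      exact (adj_getVert_consecutive hHac hp hlt (by rw [hl]; omega) h.symm).symm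
  · rintro (h | h)
    · have := p.adj_getVert_succ (i := i.val) (by rw [hl]; omega)
      rwa [h] at this
    · have := p.adj_getVert_succ (i := j.val) (by rw [hl]; omega)
      rw [h] at this
      exact this.symm

end Caterpillar

end CaterpillarAux

set_option maxHeartbeats 1000000 in
/-- **Every non-caterpillar tree contains `S_3^2`.**
Every finite tree that is not a caterpillar contains a connected subtree isomorphic to
`S_3^2`, i.e. there is an injective graph homomorphism from `S_3^2` into it. -/
theorem noncaterpillar_contains_S32 {V : Type*} [Fintype V] [DecidableEq V]
    (G : SimpleGraph V) [DecidableRel G.Adj] (hT : G.IsTree) (hnc : ¬ IsCaterpillar G) :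
    ∃ f : S32 →g G, Function.Injective f := by
  classical
  by_cases hv : ∃ v a b c : V, G.Adj v a ∧ G.Adj v b ∧ G.Adj v c ∧ a ≠ b ∧ a ≠ c ∧ b ≠ c ∧
      (G.neighborSet a).ncard ≠ 1 ∧ (G.neighborSet b).ncard ≠ 1 ∧
      (G.neighborSet c).ncard ≠ 1
  · obtain ⟨v, a, b, c, hva, hvb, hvc, hab, hac, hbc, hna, hnb, hnc'⟩ := hv
    obtain ⟨a', haa', ha'v⟩ := Caterpillar.second_neighbor hva.symm hna
    obtain ⟨b', hbb', hb'v⟩ := Caterpillar.second_neighbor hvb.symm hnb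
    obtain ⟨c', hcc', hc'v⟩ := Caterpillar.second_neighbor hvc.symm hnc'
    have hTa := hT.IsAcyclic
    -- all 21 pairwise inequalities
    have n1 : v ≠ a := hva.ne
    have n2 : v ≠ b := hvb.ne
    have n3 : v ≠ c := hvc.ne
    have n4 : v ≠ a' := ha'v.symm
    have n5 : v ≠ b' := hb'v.symm
    have n6 : v ≠ c' := hc'v.symm
    have n7 : a ≠ a' := haa'.ne
    have n8 : b ≠ b' := hbb'.ne
    have n9 : c ≠ c' := hcc'.ne
    have n10 : a ≠ b' := fun h => Caterpillar.no_triangle hTa hvb (h ▸ hbb') hva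
    have n11 : a ≠ c' := fun h => Caterpillar.no_triangle hTa hvc (h ▸ hcc') hva
    have n12 : b ≠ a' := fun h => Caterpillar.no_triangle hTa hva (h ▸ haa') hvb
    have n13 : b ≠ c' := fun h => Caterpillar.no_triangle hTa hvc (h ▸ hcc') hvb
    have n14 : c ≠ a' := fun h => Caterpillar.no_triangle hTa hva (h ▸ haa') hvc
    have n15 : c ≠ b' := fun h => Caterpillar.no_triangle hTa hvb (h ▸ hbb') hvc
    have n16 : a' ≠ b' := fun h =>
      Caterpillar.no_square hTa hva haa' hvb (by rw [h]; exact hbb') hab ha'v.symm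
    have n17 : a' ≠ c' := fun h =>
      Caterpillar.no_square hTa hva haa' hvc (by rw [h]; exact hcc') hac ha'v.symm
    have n18 : b' ≠ c' := fun h =>
      Caterpillar.no_square hTa hvb hbb' hvc (by rw [h]; exact hcc') hbc hb'v.symm
    set g : Fin 7 → V := fun i => match i with
      | 0 => v | 1 => a | 2 => b | 3 => c | 4 => a' | 5 => b' | 6 => c' with hg
    refine ⟨⟨g, ?_⟩, ?_⟩
    · intro x y h
      fin_cases x <;> fin_cases y <;>
        first
          | exact absurd h (by decide)
          | exact hva | exact hva.symm | exact hvb | exact hvb.symm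
          | exact hvc | exact hvc.symm | exact haa' | exact haa'.symm
          | exact hbb' | exact hbb'.symm | exact hcc' | exact hcc'.symm
    · intro x y hxy
      fin_cases x <;> fin_cases y <;>
        first
          | rfl
          | exact absurd hxy n1 | exact absurd hxy n1.symm
          | exact absurd hxy n2 | exact absurd hxy n2.symm
          | exact absurd hxy n3 | exact absurd hxy n3.symm
          | exact absurd hxy n4 | exact absurd hxy n4.symm
          | exact absurd hxy n5 | exact absurd hxy n5.symm
          | exact absurd hxy n6 | exact absurd hxy n6.symm
          | exact absurd hxy n7 | exact absurd hxy n7.symm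
          | exact absurd hxy n8 | exact absurd hxy n8.symm
          | exact absurd hxy n9 | exact absurd hxy n9.symm
          | exact absurd hxy n10 | exact absurd hxy n10.symm
          | exact absurd hxy n11 | exact absurd hxy n11.symm
          | exact absurd hxy n12 | exact absurd hxy n12.symm
          | exact absurd hxy n13 | exact absurd hxy n13.symm
          | exact absurd hxy n14 | exact absurd hxy n14.symm
          | exact absurd hxy n15 | exact absurd hxy n15.symm
          | exact absurd hxy n16 | exact absurd hxy n16.symm
          | exact absurd hxy n17 | exact absurd hxy n17.symm
          | exact absurd hxy n18 | exact absurd hxy n18.symm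
          | exact absurd hxy hab | exact absurd hxy hab.symm
          | exact absurd hxy hac | exact absurd hxy hac.symm
          | exact absurd hxy hbc | exact absurd hxy hbc.symm
  · exact absurd (Caterpillar.isCaterpillar_of_no_spider hT hv) hnc
end

section
/- Let w be the edge vector on S_3^2 taking the value 3 on each of the three edges incident to the central vertex and the value 1 on each of the three leaf edges. Then R_{S_3^2} w = 0, and λ_max(R_{S_3^2}) = 0. -/
open Finset Matrix

def E1 : S32.edgeSet := ⟨s(0,1), by decide⟩
def E2 : S32.edgeSet := ⟨s(0,2), by decide⟩
def E3 : S32.edgeSet := ⟨s(0,3), by decide⟩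
def E4 : S32.edgeSet := ⟨s(1,4), by decide⟩
def E5 : S32.edgeSet := ⟨s(2,5), by decide⟩
def E6 : S32.edgeSet := ⟨s(3,6), by decide⟩

lemma univE : (Finset.univ : Finset S32.edgeSet) = {E1,E2,E3,E4,E5,E6} := by decide

lemma sumE (g : S32.edgeSet → ℝ) :
    ∑ e, g e = g E1 + g E2 + g E3 + g E4 + g E5 + g E6 := by
  rw [univE, Finset.sum_insert (by decide), Finset.sum_insert (by decide),
      Finset.sum_insert (by decide), Finset.sum_insert (by decide),
      Finset.sum_insert (by decide), Finset.sum_singleton]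
  ring

lemma d0 : (S32.neighborSet 0).ncard = 3 := by rw [Set.ncard_eq_toFinset_card']; decide
lemma d1 : (S32.neighborSet 1).ncard = 2 := by rw [Set.ncard_eq_toFinset_card']; decide
lemma d2 : (S32.neighborSet 2).ncard = 2 := by rw [Set.ncard_eq_toFinset_card']; decide
lemma d3 : (S32.neighborSet 3).ncard = 2 := by rw [Set.ncard_eq_toFinset_card']; decide
lemma d4 : (S32.neighborSet 4).ncard = 1 := by rw [Set.ncard_eq_toFinset_card']; decide
lemma d5 : (S32.neighborSet 5).ncard = 1 := by rw [Set.ncard_eq_toFinset_card']; decide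
lemma d6 : (S32.neighborSet 6).ncard = 1 := by rw [Set.ncard_eq_toFinset_card']; decide

lemma rows (w : S32.edgeSet → ℝ) :
    (ricciMatrix S32).mulVec w E1
        = -(5/6)*w E1 + 1/3*w E2 + 1/3*w E3 + 1/2*w E4 ∧
    (ricciMatrix S32).mulVec w E2
        = 1/3*w E1 - 5/6*w E2 + 1/3*w E3 + 1/2*w E5 ∧
    (ricciMatrix S32).mulVec w E3
        = 1/3*w E1 + 1/3*w E2 - 5/6*w E3 + 1/2*w E6 ∧
    (ricciMatrix S32).mulVec w E4 = 1/2*w E1 - 3/2*w E4 ∧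
    (ricciMatrix S32).mulVec w E5 = 1/2*w E2 - 3/2*w E5 ∧
    (ricciMatrix S32).mulVec w E6 = 1/2*w E3 - 3/2*w E6 := by
  refine ⟨?_, ?_, ?_, ?_, ?_, ?_⟩ <;>
  · simp only [Matrix.mulVec, dotProduct]
    rw [sumE]
    norm_num (config := { decide := true })
      [ricciMatrix, E1, E2, E3, E4, E5, E6, Fin.sum_univ_seven, Sym2.mem_iff,
       d0, d1, d2, d3, d4, d5, d6]
    try ring

lemma part1 :
    (ricciMatrix S32).mulVec
        (fun e => if (0 : Fin 7) ∈ (e : Sym2 (Fin 7)) then (3 : ℝ) else 1) = 0 := by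
  funext e
  simp only [Matrix.mulVec, dotProduct, Pi.zero_apply]
  rw [sumE]
  fin_cases e <;>
    norm_num (config := { decide := true })
      [ricciMatrix, E1, E2, E3, E4, E5, E6, Fin.sum_univ_seven, Sym2.mem_iff,
       d0, d1, d2, d3, d4, d5, d6]

set_option maxHeartbeats 2000000 in
lemma eig_nonpos {t : ℝ} {w : S32.edgeSet → ℝ} (hw : w ≠ 0)
    (h : (ricciMatrix S32).mulVec w = t • w) : t ≤ 0 := by
  obtain ⟨r1, r2, r3, r4, r5, r6⟩ := rows w
  set x1 := w E1; set x2 := w E2; set x3 := w E3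
  set x4 := w E4; set x5 := w E5; set x6 := w E6
  have h1 : -(5/6)*x1 + 1/3*x2 + 1/3*x3 + 1/2*x4 = t * x1 := by
    rw [← r1, h]; rfl
  have h2 : 1/3*x1 - 5/6*x2 + 1/3*x3 + 1/2*x5 = t * x2 := by rw [← r2, h]; rfl
  have h3 : 1/3*x1 + 1/3*x2 - 5/6*x3 + 1/2*x6 = t * x3 := by rw [← r3, h]; rfl
  have h4 : 1/2*x1 - 3/2*x4 = t * x4 := by rw [← r4, h]; rfl
  have h5 : 1/2*x2 - 3/2*x5 = t * x5 := by rw [← r5, h]; rfl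
  have h6 : 1/2*x3 - 3/2*x6 = t * x6 := by rw [← r6, h]; rfl
  have hQ : t * (x1^2 + x2^2 + x3^2 + x4^2 + x5^2 + x6^2)
      = -(1/3)*((x1-x2)^2 + (x1-x3)^2 + (x2-x3)^2)
        - (1/6)*((x1-3*x4)^2 + (x2-3*x5)^2 + (x3-3*x6)^2) := by
    calc t * (x1^2 + x2^2 + x3^2 + x4^2 + x5^2 + x6^2)
        = x1 * (t*x1) + x2 * (t*x2) + x3 * (t*x3) + x4 * (t*x4) + x5 * (t*x5)
          + x6 * (t*x6) := by ring
      _ = x1 * (-(5/6)*x1 + 1/3*x2 + 1/3*x3 + 1/2*x4)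
          + x2 * (1/3*x1 - 5/6*x2 + 1/3*x3 + 1/2*x5)
          + x3 * (1/3*x1 + 1/3*x2 - 5/6*x3 + 1/2*x6)
          + x4 * (1/2*x1 - 3/2*x4) + x5 * (1/2*x2 - 3/2*x5)
          + x6 * (1/2*x3 - 3/2*x6) := by rw [h1, h2, h3, h4, h5, h6]
      _ = _ := by ring
  have hx : 0 < x1^2 + x2^2 + x3^2 + x4^2 + x5^2 + x6^2 := by
    rcases Function.ne_iff.mp hw with ⟨e, he⟩
    have h' : x1 ≠ 0 ∨ x2 ≠ 0 ∨ x3 ≠ 0 ∨ x4 ≠ 0 ∨ x5 ≠ 0 ∨ x6 ≠ 0 := by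
      fin_cases e
      · exact Or.inl he
      · exact Or.inr (Or.inl he)
      · exact Or.inr (Or.inr (Or.inl he))
      · exact Or.inr (Or.inr (Or.inr (Or.inl he)))
      · exact Or.inr (Or.inr (Or.inr (Or.inr (Or.inl he))))
      · exact Or.inr (Or.inr (Or.inr (Or.inr (Or.inr he))))
    have s1 := sq_nonneg x1; have s2 := sq_nonneg x2; have s3 := sq_nonneg x3
    have s4 := sq_nonneg x4; have s5 := sq_nonneg x5; have s6 := sq_nonneg x6
    rcases h' with h'|h'|h'|h'|h'|h' <;>
      · have := sq_pos_of_ne_zero h'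
        linarith
  by_contra ht
  push_neg at ht
  have hRHS : -(1/3)*((x1-x2)^2 + (x1-x3)^2 + (x2-x3)^2)
      - (1/6)*((x1-3*x4)^2 + (x2-3*x5)^2 + (x3-3*x6)^2) ≤ 0 := by
    have := sq_nonneg (x1-x2); have := sq_nonneg (x1-x3); have := sq_nonneg (x2-x3)
    have := sq_nonneg (x1-3*x4); have := sq_nonneg (x2-3*x5); have := sq_nonneg (x3-3*x6)
    linarith
  have := mul_pos ht hx
  linarith



/-- **The null vector of `S_3^2`.**
The edge vector taking the value `3` on the three edges incident to the central vertex
and `1` on the three leaf edges satisfies `R_{S_3^2} w = 0`, and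
`λ_max(R_{S_3^2}) = 0`. -/
theorem S32_null_vector :
    (ricciMatrix S32).mulVec
        (fun e => if (0 : Fin 7) ∈ (e : Sym2 (Fin 7)) then (3 : ℝ) else 1) = 0 ∧
    lambdaMax (ricciMatrix S32) = 0 := by
  refine ⟨part1, ?_⟩
  have hwne : (fun e : S32.edgeSet =>
      if (0 : Fin 7) ∈ (e : Sym2 (Fin 7)) then (3 : ℝ) else 1) ≠ 0 := by
    intro hc
    have h0 := congrFun hc E1
    have : ((0 : Fin 7) ∈ (E1 : Sym2 (Fin 7))) := by decide
    simp [this] at h0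
  have hmem : (0 : ℝ) ∈ {t : ℝ | ∃ w : S32.edgeSet → ℝ,
      w ≠ 0 ∧ (ricciMatrix S32).mulVec w = t • w} :=
    ⟨_, hwne, by rw [part1]; simp⟩
  have hub : ∀ t ∈ {t : ℝ | ∃ w : S32.edgeSet → ℝ,
      w ≠ 0 ∧ (ricciMatrix S32).mulVec w = t • w}, t ≤ 0 := by
    rintro t ⟨w, hw, h⟩
    exact eig_nonpos hw h
  exact le_antisymm (csSup_le ⟨0, hmem⟩ hub) (le_csSup ⟨0, hub⟩ hmem)
end

section
/- Let T be an infinite, locally finite tree (a connected acyclic simple graph with infinitely many vertices in which every vertex has finite degree). Then for every ε > 0 there exists a finitely supported real-valued edge function f ≠ 0 with ⟨f, R_T f⟩ ≥ −ε·⟨f, f⟩; equivalently, the supremum over nonzero finitely supported edge functions f of the Rayleigh quotient ⟨f, R_T f⟩ / ⟨f, f⟩ is at least 0. -/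
open Finset

open Classical in
/-- The entry of the Ricci matrix of a (possibly infinite) graph at a pair of edges:
`-(1/d_x + 1/d_y)` for `e = f = {x,y}`, `1/d_z` if the distinct edges `e, f` share the
vertex `z`, and `0` if they are disjoint.  The degree of `v` is
`(G.neighborSet v).ncard`. -/
noncomputable def ricciEntry {V : Type*} (G : SimpleGraph V) (e f : Sym2 V) : ℝ :=
  if e = f then
    -(Sym2.lift ⟨fun x y =>
        1 / ((G.neighborSet x).ncard : ℝ) + 1 / ((G.neighborSet y).ncard : ℝ),
      fun _ _ => by ring⟩ e)
  else
    Sym2.lift ⟨fun x y =>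
        (if x ∈ f then 1 / ((G.neighborSet x).ncard : ℝ) else 0) +
        (if y ∈ f then 1 / ((G.neighborSet y).ncard : ℝ) else 0),
      fun _ _ => add_comm _ _⟩ e

/-- On a path, `getVert` is injective up to the length. -/
lemma aux_getVert_inj {V : Type*} {G : SimpleGraph V} {u v : V} {p : G.Walk u v}
    (hp : p.IsPath) : ∀ i, i ≤ p.length → ∀ j, j ≤ p.length →
      p.getVert i = p.getVert j → i = j := by
  induction p with
  | nil => intro i hi j hj _; simp only [SimpleGraph.Walk.length_nil, Nat.le_zero] at hi hj; omega
  | @cons a b c h q ih =>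
    rw [SimpleGraph.Walk.cons_isPath_iff] at hp
    intro i hi j hj heq
    match i, j with
    | 0, 0 => rfl
    | 0, (j+1) =>
      exfalso
      apply hp.2
      rw [SimpleGraph.Walk.mem_support_iff_exists_getVert]
      refine ⟨j, ?_, ?_⟩
      · rw [show (q.cons h).getVert 0 = a from rfl] at heq
        rw [SimpleGraph.Walk.getVert_cons_succ] at heq
        exact heq.symm
      · simpa using hj
    | (i+1), 0 =>
      exfalso
      apply hp.2
      rw [SimpleGraph.Walk.mem_support_iff_exists_getVert]
      refine ⟨i, ?_, ?_⟩
      · rw [show (q.cons h).getVert 0 = a from rfl] at heq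
        rw [SimpleGraph.Walk.getVert_cons_succ] at heq
        exact heq
      · simpa using hi
    | (i+1), (j+1) =>
      have := ih hp.1 i (by simpa using hi) j (by simpa using hj)
        (by rwa [SimpleGraph.Walk.getVert_cons_succ, SimpleGraph.Walk.getVert_cons_succ] at heq)
      omega

/-- Balls in a connected locally finite graph are finite. -/
lemma aux_ball_finite {V : Type*} {G : SimpleGraph V} (hc : G.Connected)
    (hlf : ∀ v : V, (G.neighborSet v).Finite) (u : V) :
    ∀ n : ℕ, {v : V | G.dist u v ≤ n}.Finite := by
  intro n
  induction n with
  | zero =>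
    apply Set.Finite.subset (Set.finite_singleton u)
    intro v hv
    simp only [Set.mem_setOf_eq, Nat.le_zero] at hv
    simp [(hc.dist_eq_zero_iff.mp hv).symm]
  | succ n ih =>
    apply Set.Finite.subset (ih.union (Set.Finite.biUnion ih (fun x _ => hlf x)))
    intro v hv
    simp only [Set.mem_setOf_eq] at hv
    by_cases h0 : G.dist u v ≤ n
    · exact Or.inl h0
    right
    have hdv : G.dist u v = n + 1 := by omega
    obtain ⟨p, _, hlen⟩ := hc.exists_path_of_dist u v
    have hnil : ¬ p.reverse.Nil := by
      rw [SimpleGraph.Walk.nil_iff_length_eq, SimpleGraph.Walk.length_reverse]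
      omega
    obtain ⟨x, hadj, q, hq⟩ := SimpleGraph.Walk.not_nil_iff.mp hnil
    have hqlen : q.length = n := by
      have h1 := congrArg SimpleGraph.Walk.length hq
      rw [SimpleGraph.Walk.length_reverse, SimpleGraph.Walk.length_cons] at h1
      omega
    have hx : x ∈ {v : V | G.dist u v ≤ n} := by
      have : G.dist u x ≤ q.reverse.length := SimpleGraph.dist_le _
      rwa [SimpleGraph.Walk.length_reverse, hqlen] at this
    exact Set.mem_biUnion hx hadj.symm

/-- **Infinite locally finite trees have nonnegative spectral top.**
If `T` is an infinite locally finite tree, then for every `ε > 0` there is a nonzero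
finitely supported edge function `f` with `⟨f, R_T f⟩ ≥ −ε ⟨f, f⟩`. -/
theorem infinite_tree_rayleigh_nonneg {V : Type*} [Infinite V] (G : SimpleGraph V)
    (hT : G.IsTree) (hlf : ∀ v : V, (G.neighborSet v).Finite)
    (ε : ℝ) (hε : 0 < ε) :
    ∃ f : G.edgeSet →₀ ℝ, f ≠ 0 ∧
      -(ε * ∑ e ∈ f.support, (f e) ^ 2) ≤
        ∑ e ∈ f.support, ∑ e' ∈ f.support,
          f e * ricciEntry G (e : Sym2 V) (e' : Sym2 V) * f e' := by
  classical
  obtain ⟨u⟩ := (inferInstance : Nonempty V)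
  have hc : G.Connected := hT.isConnected
  set n : ℕ := max 1 ⌈2/ε⌉₊ with hn
  obtain ⟨v, hv⟩ := ((aux_ball_finite hc hlf u n).infinite_compl).nonempty
  have hvd : n < G.dist u v := by
    by_contra h
    exact hv (by simp only [Set.mem_setOf_eq]; omega)
  obtain ⟨p, hp, hlen⟩ := hc.exists_path_of_dist u v
  set L := p.length with hL
  have hL1 : 1 ≤ L := by omega
  set w : ℕ → V := fun i => p.getVert i with hw
  have hwinj : ∀ i ≤ L, ∀ j ≤ L, w i = w j → i = j :=
    fun i hi j hj => aux_getVert_inj hp i hi j hj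
  -- degrees along the path are positive
  have hdeg : ∀ k ≤ L, 0 < (G.neighborSet (w k)).ncard := by
    intro k hk
    rw [Set.ncard_pos (hlf _)]
    rcases Nat.lt_or_ge k L with h | h
    · exact ⟨w (k+1), p.adj_getVert_succ h⟩
    · have hkL : k = L := le_antisymm hk h
      have h1 : L - 1 < L := by omega
      have h2 := p.adj_getVert_succ h1
      rw [show L - 1 + 1 = L from by omega] at h2
      exact ⟨w (L-1), by rw [hkL]; exact h2.symm⟩
  set d : ℕ → ℝ := fun k => 1 / ((G.neighborSet (w k)).ncard : ℝ) with hd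
  have hdk : ∀ k, d k = 1 / ((G.neighborSet (w k)).ncard : ℝ) := fun k => rfl
  have hd01 : ∀ k ≤ L, 0 < d k ∧ d k ≤ 1 := by
    intro k hk
    have h1 := hdeg k hk
    have h1' : (1:ℝ) ≤ ((G.neighborSet (w k)).ncard : ℝ) := by exact_mod_cast h1
    constructor
    · rw [hdk]; positivity
    · rw [hdk, div_le_one (by linarith)]; linarith
  -- the edges of the path
  obtain ⟨E, hE⟩ : ∃ E : ℕ → G.edgeSet, ∀ i < L, (E i : Sym2 V) = s(w i, w (i+1)) :=
    ⟨fun i => if h : i < L then ⟨s(w i, w (i+1)), (SimpleGraph.mem_edgeSet G).mpr (p.adj_getVert_succ h)⟩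
      else ⟨s(w 0, w 1), (SimpleGraph.mem_edgeSet G).mpr (p.adj_getVert_succ (by omega))⟩,
     fun i h => by simp only [dif_pos h]⟩
  have hEinj : ∀ i ∈ range L, ∀ j ∈ range L, E i = E j → i = j := by
    intro i hi j hj h
    rw [mem_range] at hi hj
    have h2 : s(w i, w (i+1)) = s(w j, w (j+1)) := by rw [← hE i hi, ← hE j hj, h]
    rw [Sym2.eq_iff] at h2
    rcases h2 with ⟨h3, _⟩ | ⟨h3, h4⟩
    · exact hwinj i (by omega) j (by omega) h3
    · have h5 := hwinj i (by omega) (j+1) (by omega) h3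
      have h6 := hwinj (i+1) (by omega) j (by omega) h4
      omega
  set s : Finset G.edgeSet := (range L).image E with hs
  set f : G.edgeSet →₀ ℝ := Finsupp.indicator s (fun _ _ => (1:ℝ)) with hf
  have hfapp : ∀ e ∈ s, f e = 1 := fun e he => Finsupp.indicator_of_mem he _
  have hfsupp : f.support = s := by
    apply Finset.Subset.antisymm
    · intro e he
      by_contra hes
      exact (Finsupp.mem_support_iff.mp he) (Finsupp.indicator_of_notMem hes _)
    · intro e he
      exact Finsupp.mem_support_iff.mpr (by rw [hfapp e he]; norm_num)
  have hfne : f ≠ 0 := by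
    have h0 : E 0 ∈ s := mem_image_of_mem E (mem_range.mpr (by omega))
    intro h
    have h1 := hfapp _ h0
    rw [h] at h1
    simp at h1
  refine ⟨f, hfne, ?_⟩
  rw [hfsupp]
  -- value of the quadratic form entries
  have hRval : ∀ i ∈ range L, ∀ j ∈ range L,
      ricciEntry G ((E i : Sym2 V)) ((E j : Sym2 V)) =
        (if j = i then -(d i + d (i+1)) else 0) + (if j = i+1 then d (i+1) else 0) +
          (if i = j+1 then d i else 0) := by
    intro i hi j hj
    rw [mem_range] at hi hj
    by_cases hij : i = j
    · subst hij
      rw [if_pos rfl, if_neg (by omega), if_neg (by omega)]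
      unfold ricciEntry
      rw [if_pos rfl, hE i hi, Sym2.lift_mk]
      rw [hdk, hdk]
      ring
    · rw [if_neg (fun h => hij h.symm)]
      have hne : (E i : Sym2 V) ≠ (E j : Sym2 V) := by
        intro h
        exact hij (hEinj i (mem_range.mpr hi) j (mem_range.mpr hj) (Subtype.ext h))
      unfold ricciEntry
      rw [if_neg hne, hE i hi, Sym2.lift_mk, hE j hj]
      dsimp only
      have m1 : (w i ∈ s(w j, w (j+1))) ↔ i = j+1 := by
        rw [Sym2.mem_iff]
        constructor
        · rintro (h | h)
          · exact absurd (hwinj i (by omega) j (by omega) h) hij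
          · exact hwinj i (by omega) (j+1) (by omega) h
        · intro h; right; rw [h]
      have m2 : (w (i+1) ∈ s(w j, w (j+1))) ↔ j = i+1 := by
        rw [Sym2.mem_iff]
        constructor
        · rintro (h | h)
          · exact (hwinj (i+1) (by omega) j (by omega) h).symm
          · have := hwinj (i+1) (by omega) (j+1) (by omega) h
            omega
        · intro h; left; rw [h]
      by_cases h1 : i = j + 1
      · have h2 : ¬ (j = i + 1) := by omega
        rw [if_pos (m1.mpr h1), if_neg (fun hm => h2 (m2.mp hm)), if_neg h2, if_pos h1]
        rw [hdk]; ring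
      · by_cases h2 : j = i + 1
        · rw [if_neg (fun hm => h1 (m1.mp hm)), if_pos (m2.mpr h2), if_pos h2, if_neg h1]
          rw [hdk]; ring
        · rw [if_neg (fun hm => h1 (m1.mp hm)), if_neg (fun hm => h2 (m2.mp hm)),
            if_neg h2, if_neg h1]
          ring
  -- the squared norm
  have hsum1 : ∑ e ∈ s, (f e) ^ 2 = (L : ℝ) := by
    rw [Finset.sum_congr rfl (fun e he => by rw [hfapp e he, one_pow])]
    rw [Finset.sum_const, hs, Finset.card_image_of_injOn (fun x hx y hy h => hEinj x hx y hy h),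
      card_range, nsmul_eq_mul, mul_one]
  -- the quadratic form
  have hsum2 : ∑ e ∈ s, ∑ e' ∈ s, f e * ricciEntry G (e : Sym2 V) (e' : Sym2 V) * f e' =
      ∑ i ∈ range L, ∑ j ∈ range L, ricciEntry G ((E i : Sym2 V)) ((E j : Sym2 V)) := by
    rw [Finset.sum_congr rfl (fun e he => Finset.sum_congr rfl (fun e' he' => by
      rw [hfapp e he, hfapp e' he', one_mul, mul_one]))]
    rw [hs, Finset.sum_image hEinj]
    exact Finset.sum_congr rfl (fun i _ => by rw [Finset.sum_image hEinj])
  -- evaluate the double sum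
  have hinner : ∀ i ∈ range L,
      (∑ j ∈ range L, ((if j = i then -(d i + d (i+1)) else 0) +
        (if j = i+1 then d (i+1) else 0) + (if i = j+1 then d i else 0))) =
      -(d i + d (i+1)) + (if i+1 < L then d (i+1) else 0) + (if i = 0 then 0 else d i) := by
    intro i hi
    rw [mem_range] at hi
    rw [Finset.sum_add_distrib, Finset.sum_add_distrib]
    congr 1
    · congr 1
      · rw [Finset.sum_ite_eq' (range L) i (fun _ => -(d i + d (i+1))),
          if_pos (mem_range.mpr hi)]
      · rw [Finset.sum_ite_eq' (range L) (i+1) (fun _ => d (i+1))]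
        by_cases h : i + 1 < L
        · rw [if_pos (mem_range.mpr h), if_pos h]
        · rw [if_neg (fun hm => h (mem_range.mp hm)), if_neg h]
    · rcases Nat.eq_zero_or_pos i with h0 | h0
      · subst h0
        rw [if_pos rfl]
        exact Finset.sum_eq_zero (fun j _ => if_neg (by omega))
      · obtain ⟨k, rfl⟩ : ∃ k, i = k + 1 := ⟨i - 1, by omega⟩
        rw [if_neg (by omega)]
        rw [Finset.sum_congr rfl (fun j _ => if_congr (by omega : (k+1 = j+1) ↔ (j = k))
          rfl rfl)]
        rw [Finset.sum_ite_eq' (range L) k (fun _ => d (k+1)), if_pos (mem_range.mpr (by omega))]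
  have hdouble : ∑ i ∈ range L, ∑ j ∈ range L,
      ricciEntry G ((E i : Sym2 V)) ((E j : Sym2 V)) = -(d 0 + d L) := by
    rw [Finset.sum_congr rfl (fun i hi => by
      rw [Finset.sum_congr rfl (fun j hj => hRval i hi j hj), hinner i hi])]
    rw [Finset.sum_add_distrib, Finset.sum_add_distrib]
    obtain ⟨m, hm⟩ : ∃ m, L = m + 1 := ⟨L - 1, by omega⟩
    rw [hm]
    have hB1 : ∑ i ∈ range (m+1), -(d i + d (i+1)) =
        -((∑ i ∈ range m, d (i+1)) + d 0 + ((∑ i ∈ range m, d (i+1)) + d (m+1))) := by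
      rw [Finset.sum_neg_distrib]
      congr 1
      rw [Finset.sum_add_distrib, Finset.sum_range_succ' (fun i => d i) m,
        Finset.sum_range_succ (fun i => d (i+1)) m]
    have hB2 : ∑ i ∈ range (m+1), (if i+1 < m+1 then d (i+1) else 0) =
        ∑ i ∈ range m, d (i+1) := by
      rw [Finset.sum_range_succ, if_neg (by omega), add_zero]
      exact Finset.sum_congr rfl (fun i hi => if_pos (by rw [mem_range] at hi; omega))
    have hB3 : ∑ i ∈ range (m+1), (if i = 0 then 0 else d i) =
        ∑ i ∈ range m, d (i+1) := by
      rw [Finset.sum_range_succ' (fun i => if i = 0 then 0 else d i) m, if_pos rfl, add_zero]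
      exact Finset.sum_congr rfl (fun i _ => if_neg (by omega))
    rw [hB1, hB2, hB3]
    ring
  rw [hsum1, hsum2, hdouble]
  -- final arithmetic
  have hd0 := hd01 0 (by omega)
  have hdL := hd01 L le_rfl
  have hnL : (n : ℝ) ≤ (L : ℝ) := by
    have : n ≤ L := by omega
    exact_mod_cast this
  have hceil : (2/ε) ≤ (n : ℝ) := by
    calc (2/ε) ≤ (⌈2/ε⌉₊ : ℝ) := Nat.le_ceil _
    _ ≤ (n : ℝ) := by exact_mod_cast le_max_right 1 ⌈2/ε⌉₊
  have h2n : 2 ≤ ε * (n : ℝ) := by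
    rw [div_le_iff₀ hε] at hceil
    linarith
  have h2L : 2 ≤ ε * (L : ℝ) := le_trans h2n (by nlinarith)
  linarith [hd0.2, hdL.2]
end
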